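/- arXiv:2604.10820 — 6 statements merged into one kernel-verified Lean document; each statement's English description precedes it below -/
import Mathlib

section
/- (Poincaré separation / Cauchy interlacing for compressions) Let T be an n×n real symmetric matrix with eigenvalues λ₁ ≥ λ₂ ≥ ⋯ ≥ λₙ (listed with multiplicity in decreasing order), let k ≤ n, and let U be an n×k real matrix with UᵀU = I_k. If μ₁ ≥ μ₂ ≥ ⋯ ≥ μ_k are the eigenvalues of the k×k real symmetric matrix UᵀTU listed with multiplicity in decreasing order, then μ_j ≤ λ_j for every j = 1, …, k. -/
open Matrix Polynomial

lemma charpoly_diag {N : ℕ} (d : Fin N → ℝ) :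
    (Matrix.diagonal d).charpoly = ∏ i, (X - C (d i)) := by
  rw [Matrix.charpoly]
  have : (Matrix.diagonal d).charmatrix = Matrix.diagonal (fun i => X - C (d i)) := by
    ext i j
    by_cases h : i = j
    · subst h; simp
    · simp [h, Matrix.charmatrix_apply_ne _ _ _ h, Matrix.diagonal_apply_ne _ h]
  rw [this, Matrix.det_diagonal]

lemma charpoly_herm {N : ℕ} (A : Matrix (Fin N) (Fin N) ℝ) (hA : A.IsHermitian) :
    A.charpoly = ∏ i, (X - C (hA.eigenvalues i)) := by
  have e1 : A = LinearMap.toMatrix (PiLp.basisFun 2 ℝ (Fin N)) (PiLp.basisFun 2 ℝ (Fin N))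
      (Matrix.toEuclideanLin A) := by
    rw [Matrix.toEuclideanLin_eq_toLin, LinearMap.toMatrix_toLin]
  have h3 : ∀ j, Matrix.toEuclideanLin A (hA.eigenvectorBasis j)
      = hA.eigenvalues j • hA.eigenvectorBasis j := by
    intro j
    apply (WithLp.equiv 2 (Fin N → ℝ)).injective
    have := hA.mulVec_eigenvectorBasis j
    simpa [Matrix.ofLp_toEuclideanLin_apply] using this
  have e2 : Matrix.diagonal hA.eigenvalues = LinearMap.toMatrix hA.eigenvectorBasis.toBasis
      hA.eigenvectorBasis.toBasis (Matrix.toEuclideanLin A) := by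
    ext i j
    rw [LinearMap.toMatrix_apply, OrthonormalBasis.coe_toBasis, h3, _root_.map_smul]
    by_cases h : i = j
    · subst h
      simp [OrthonormalBasis.coe_toBasis_repr_apply, OrthonormalBasis.repr_self,
        EuclideanSpace.single_apply]
    · simp [Matrix.diagonal_apply_ne _ h, OrthonormalBasis.coe_toBasis_repr_apply,
        OrthonormalBasis.repr_self, EuclideanSpace.single_apply, Ne.symm h, h]
  conv_lhs => rw [e1]
  rw [LinearMap.charpoly_toMatrix, ← LinearMap.charpoly_toMatrix
    (Matrix.toEuclideanLin A) hA.eigenvectorBasis.toBasis, ← e2, charpoly_diag]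

lemma exists_perm_of_multiset_eq {m : ℕ} {f g : Fin m → ℝ} (hf : Antitone f)
    (h : Multiset.map f Finset.univ.val = Multiset.map g Finset.univ.val) :
    ∃ σ : Equiv.Perm (Fin m), ∀ i, f i = g (σ i) := by
  have hfg : (List.ofFn f).Perm (List.ofFn g) := by
    rw [← Multiset.coe_eq_coe, ← Fin.univ_val_map, ← Fin.univ_val_map]
    exact_mod_cast h
  have hmono : Monotone (f ∘ Fin.revPerm) := by
    intro a b hab
    exact hf (by simpa using Fin.rev_le_rev.mpr hab)
  have hmono2 : Monotone (g ∘ Tuple.sort g) := Tuple.monotone_sort g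
  have hperm : (List.ofFn (f ∘ Fin.revPerm)).Perm (List.ofFn (g ∘ Tuple.sort g)) :=
    ((Equiv.Perm.ofFn_comp_perm Fin.revPerm f).trans hfg).trans
      (Equiv.Perm.ofFn_comp_perm (Tuple.sort g) g).symm
  have heq : f ∘ Fin.revPerm = g ∘ Tuple.sort g :=
    List.ofFn_injective (List.Perm.eq_of_sortedLE hmono.sortedLE_ofFn hmono2.sortedLE_ofFn hperm)
  refine ⟨(Fin.revPerm.symm).trans (Tuple.sort g), fun i => ?_⟩
  have := congrFun heq (Fin.revPerm.symm i)
  simpa using this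

variable {m N : ℕ}

lemma sum_dotProduct' {ι : Type*} (s : Finset ι) (v : ι → (Fin N → ℝ)) (w : Fin N → ℝ) :
    (∑ i ∈ s, v i) ⬝ᵥ w = ∑ i ∈ s, v i ⬝ᵥ w := by
  simp only [dotProduct, Finset.sum_apply, Finset.sum_mul]
  rw [Finset.sum_comm]

lemma dotProduct_sum' {ι : Type*} (s : Finset ι) (w : Fin N → ℝ) (v : ι → (Fin N → ℝ)) :
    w ⬝ᵥ (∑ i ∈ s, v i) = ∑ i ∈ s, w ⬝ᵥ v i := by
  simp only [dotProduct, Finset.sum_apply, Finset.mul_sum]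
  rw [Finset.sum_comm]

lemma mulVec_sum' {ι : Type*} (s : Finset ι) (A : Matrix (Fin N) (Fin N) ℝ)
    (v : ι → (Fin N → ℝ)) : A *ᵥ (∑ i ∈ s, v i) = ∑ i ∈ s, A *ᵥ v i := by
  ext x
  simp only [Matrix.mulVec, dotProduct, Finset.sum_apply, Finset.mul_sum]
  rw [Finset.sum_comm]

lemma ortho_inj {e : Fin m → (Fin N → ℝ)}
    (h : ∀ i j, e i ⬝ᵥ e j = if i = j then (1:ℝ) else 0) : Function.Injective e := by
  intro i j hij
  by_contra hne
  have h1 := h i j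
  rw [hij, h j j] at h1
  simp [hne] at h1

lemma sum_dot {e : Fin m → (Fin N → ℝ)}
    (h : ∀ i j, e i ⬝ᵥ e j = if i = j then (1:ℝ) else 0) (s : Finset (Fin m))
    (a b : Fin m → ℝ) :
    (∑ i ∈ s, a i • e i) ⬝ᵥ (∑ i ∈ s, b i • e i) = ∑ i ∈ s, a i * b i := by
  rw [sum_dotProduct']
  refine Finset.sum_congr rfl fun i hi => ?_
  rw [dotProduct_sum']
  rw [Finset.sum_eq_single i]
  · rw [smul_dotProduct, dotProduct_smul, h i i]
    simp [mul_comm]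
  · intro j hj hne
    rw [smul_dotProduct, dotProduct_smul, h i j]
    simp [Ne.symm hne, hne]
  · intro hi'; exact absurd hi hi'

lemma ortho_li {e : Fin m → (Fin N → ℝ)}
    (h : ∀ i j, e i ⬝ᵥ e j = if i = j then (1:ℝ) else 0) : LinearIndependent ℝ e := by
  rw [linearIndependent_iff']
  intro s g hg i hi
  have h0 := congrArg (fun v => v ⬝ᵥ e i) hg
  simp only [zero_dotProduct] at h0
  rw [sum_dotProduct'] at h0
  rw [Finset.sum_eq_single i] at h0
  · rw [smul_dotProduct, h i i] at h0; simpa using h0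
  · intro j hj hne
    rw [smul_dotProduct, h j i]; simp [hne]
  · intro hi'; exact absurd hi hi'

lemma mem_span_ortho {e : Fin m → (Fin N → ℝ)}
    (h : ∀ i j, e i ⬝ᵥ e j = if i = j then (1:ℝ) else 0) (s : Finset (Fin m))
    {x : Fin N → ℝ} (hx : x ∈ Submodule.span ℝ (e '' ↑s)) :
    ∃ a : Fin m → ℝ, x = ∑ i ∈ s, a i • e i := by
  rw [← Finset.coe_image, Submodule.mem_span_finset] at hx
  obtain ⟨f, -, hf⟩ := hx
  refine ⟨fun i => f (e i), ?_⟩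
  rw [← hf, Finset.sum_image (fun i _ j _ hij => ortho_inj h hij)]

lemma rayleigh_lower (A : Matrix (Fin N) (Fin N) ℝ) {e : Fin m → (Fin N → ℝ)}
    (h : ∀ i j, e i ⬝ᵥ e j = if i = j then (1:ℝ) else 0) {d : Fin m → ℝ}
    (heig : ∀ i, A *ᵥ e i = d i • e i) (s : Finset (Fin m)) {c : ℝ}
    (hd : ∀ i ∈ s, c ≤ d i) (a : Fin m → ℝ) :
    c * ((∑ i ∈ s, a i • e i) ⬝ᵥ (∑ i ∈ s, a i • e i))
      ≤ (∑ i ∈ s, a i • e i) ⬝ᵥ (A *ᵥ (∑ i ∈ s, a i • e i)) := by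
  have hAx : A *ᵥ (∑ i ∈ s, a i • e i) = ∑ i ∈ s, (a i * d i) • e i := by
    rw [mulVec_sum']
    refine Finset.sum_congr rfl fun i _ => ?_
    rw [Matrix.mulVec_smul, heig i, smul_smul]
  rw [hAx, sum_dot h, sum_dot h, Finset.mul_sum]
  refine Finset.sum_le_sum fun i hi => ?_
  have h2 : c * (a i * a i) ≤ d i * (a i * a i) :=
    mul_le_mul_of_nonneg_right (hd i hi) (mul_self_nonneg _)
  nlinarith [h2]

lemma rayleigh_upper (A : Matrix (Fin N) (Fin N) ℝ) {e : Fin m → (Fin N → ℝ)}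
    (h : ∀ i j, e i ⬝ᵥ e j = if i = j then (1:ℝ) else 0) {d : Fin m → ℝ}
    (heig : ∀ i, A *ᵥ e i = d i • e i) (s : Finset (Fin m)) {c : ℝ}
    (hd : ∀ i ∈ s, d i ≤ c) (a : Fin m → ℝ) :
    (∑ i ∈ s, a i • e i) ⬝ᵥ (A *ᵥ (∑ i ∈ s, a i • e i))
      ≤ c * ((∑ i ∈ s, a i • e i) ⬝ᵥ (∑ i ∈ s, a i • e i)) := by
  have := rayleigh_lower (-A) h (d := -d) (fun i => by
    simp [Matrix.neg_mulVec, heig i]) s (c := -c)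
    (fun i hi => neg_le_neg (hd i hi)) a
  rw [Matrix.neg_mulVec, dotProduct_neg] at this
  linarith

lemma roots_aux {m : ℕ} (f : Fin m → ℝ) :
    (∏ i, (X - C (f i))).roots = Finset.univ.val.map f := by
  have h : ∏ i, (X - C (f i)) = ((Finset.univ.val.map f).map (fun a => X - C a)).prod := by
    rw [Multiset.map_map, Finset.prod_eq_multiset_prod]
    rfl
  rw [h, Polynomial.roots_multiset_prod_X_sub_C]

/-- Poincaré separation / Cauchy interlacing for compressions:
Let `T` be an `n × n` real symmetric matrix with eigenvalues `lam 0 ≥ ⋯ ≥ lam (n-1)`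
listed with multiplicity in decreasing order (encoded by factorizing the characteristic
polynomial), let `k ≤ n`, and let `U` be `n × k` with `UᵀU = I_k`. If `mu 0 ≥ ⋯ ≥ mu (k-1)`
are the eigenvalues of `UᵀTU` listed with multiplicity in decreasing order, then
`mu j ≤ lam j` for every `j`. -/
theorem poincare_separation
    (n k : ℕ) (hk : k ≤ n) (T : Matrix (Fin n) (Fin n) ℝ) (hsymm : T.IsSymm)
    (lam : Fin n → ℝ) (hlam : Antitone lam)
    (hcharT : T.charpoly = ∏ i, (X - C (lam i)))
    (U : Matrix (Fin n) (Fin k) ℝ) (hU : Uᵀ * U = 1)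
    (mu : Fin k → ℝ) (hmu : Antitone mu)
    (hcharQ : (Uᵀ * T * U).charpoly = ∏ j, (X - C (mu j))) :
    ∀ j : Fin k, mu j ≤ lam (Fin.castLE hk j) := by

  classical
  intro j
  set jn : Fin n := Fin.castLE hk j with hjn
  set Q : Matrix (Fin k) (Fin k) ℝ := Uᵀ * T * U with hQdef
  have hT : T.IsHermitian := by
    rw [Matrix.IsHermitian, Matrix.conjTranspose_eq_transpose_of_trivial]; exact hsymm
  have hQ : Q.IsHermitian := by
    rw [Matrix.IsHermitian, Matrix.conjTranspose_eq_transpose_of_trivial, hQdef,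
      Matrix.transpose_mul, Matrix.transpose_mul, Matrix.transpose_transpose, hsymm.eq,
      Matrix.mul_assoc]
  -- match lam with eigenvalues of T
  have hmsT : Multiset.map lam Finset.univ.val = Multiset.map hT.eigenvalues Finset.univ.val := by
    have h1 := charpoly_herm T hT
    rw [hcharT] at h1
    have := congrArg Polynomial.roots h1
    rwa [roots_aux, roots_aux] at this
  obtain ⟨σ, hσ⟩ := exists_perm_of_multiset_eq hlam hmsT
  have hmsQ : Multiset.map mu Finset.univ.val = Multiset.map hQ.eigenvalues Finset.univ.val := by
    have h1 := charpoly_herm Q hQ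
    rw [hcharQ] at h1
    have := congrArg Polynomial.roots h1
    rwa [roots_aux, roots_aux] at this
  obtain ⟨τ, hτ⟩ := exists_perm_of_multiset_eq hmu hmsQ
  -- eigenvectors as plain vectors
  set v : Fin n → (Fin n → ℝ) := fun i => ⇑(hT.eigenvectorBasis (σ i)) with hvdef
  set u : Fin k → (Fin k → ℝ) := fun i => ⇑(hQ.eigenvectorBasis (τ i)) with hudef
  have hv : ∀ i i', v i ⬝ᵥ v i' = if i = i' then (1:ℝ) else 0 := by
    intro i i'
    have h := orthonormal_iff_ite.mp hT.eigenvectorBasis.orthonormal (σ i) (σ i')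
    have h2 : v i ⬝ᵥ v i' = if σ i = σ i' then (1:ℝ) else 0 := by
      rw [← h]
      simp only [PiLp.inner_apply, RCLike.inner_apply, starRingEnd_apply, star_trivial]
      simp only [dotProduct, hvdef]
      exact Finset.sum_congr rfl fun _ _ => mul_comm _ _
    rw [h2, if_congr (EmbeddingLike.apply_eq_iff_eq σ) rfl rfl]
  have hu : ∀ i i', u i ⬝ᵥ u i' = if i = i' then (1:ℝ) else 0 := by
    intro i i'
    have h := orthonormal_iff_ite.mp hQ.eigenvectorBasis.orthonormal (τ i) (τ i')
    have h2 : u i ⬝ᵥ u i' = if τ i = τ i' then (1:ℝ) else 0 := by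
      rw [← h]
      simp only [PiLp.inner_apply, RCLike.inner_apply, starRingEnd_apply, star_trivial]
      simp only [dotProduct, hudef]
      exact Finset.sum_congr rfl fun _ _ => mul_comm _ _
    rw [h2, if_congr (EmbeddingLike.apply_eq_iff_eq τ) rfl rfl]
  have hveig : ∀ i, T *ᵥ v i = lam i • v i := fun i => by
    rw [hσ i]; exact hT.mulVec_eigenvectorBasis (σ i)
  have hueig : ∀ i, Q *ᵥ u i = mu i • u i := fun i => by
    rw [hτ i]; exact hQ.mulVec_eigenvectorBasis (τ i)
  -- isometry facts
  have hiso : ∀ x y : Fin k → ℝ, (U *ᵥ x) ⬝ᵥ (U *ᵥ y) = x ⬝ᵥ y := by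
    intro x y
    rw [Matrix.dotProduct_mulVec, ← Matrix.vecMul_transpose, Matrix.vecMul_vecMul, hU,
      Matrix.vecMul_one]
  have hcompat : ∀ x : Fin k → ℝ, (U *ᵥ x) ⬝ᵥ (T *ᵥ (U *ᵥ x)) = x ⬝ᵥ (Q *ᵥ x) := by
    intro x
    calc (U *ᵥ x) ⬝ᵥ (T *ᵥ (U *ᵥ x))
        = ((U *ᵥ x) ᵥ* T) ⬝ᵥ (U *ᵥ x) := Matrix.dotProduct_mulVec _ _ _
      _ = (((U *ᵥ x) ᵥ* T) ᵥ* U) ⬝ᵥ x := Matrix.dotProduct_mulVec _ _ _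
      _ = x ⬝ᵥ (Q *ᵥ x) := by
          rw [← Matrix.vecMul_transpose, Matrix.vecMul_vecMul, Matrix.vecMul_vecMul,
            ← Matrix.dotProduct_mulVec, hQdef, Matrix.mul_assoc]
  -- subspaces
  set L : (Fin k → ℝ) →ₗ[ℝ] (Fin n → ℝ) := Matrix.mulVecLin U with hLdef
  have hLapp : ∀ x, L x = U *ᵥ x := fun x => rfl
  have hLinj : Function.Injective L := by
    rw [← LinearMap.ker_eq_bot, LinearMap.ker_eq_bot']
    intro x hx
    have : x ⬝ᵥ x = 0 := by rw [← hiso x x, ← hLapp x, hx]; simp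
    exact dotProduct_self_eq_zero.mp this
  set S : Submodule ℝ (Fin k → ℝ) := Submodule.span ℝ (u '' ↑(Finset.Iic j)) with hSdef
  set W : Submodule ℝ (Fin n → ℝ) := Submodule.span ℝ (v '' ↑(Finset.Ici jn)) with hWdef
  have hSrank : Module.finrank ℝ S = (j : ℕ) + 1 := by
    have h9 := finrank_span_eq_card ((ortho_li hu).comp
      (Subtype.val : {x : Fin k // x ∈ (↑(Finset.Iic j) : Set (Fin k))} → Fin k)
      Subtype.val_injective)
    have h10 : Fintype.card {x : Fin k // x ∈ (↑(Finset.Iic j) : Set (Fin k))}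
        = (j : ℕ) + 1 := by
      simp only [Finset.coe_sort_coe, Fintype.card_coe, Fin.card_Iic]
    rw [hSdef, Set.image_eq_range]
    exact h9.trans h10
  have hWrank : Module.finrank ℝ W = n - (j : ℕ) := by
    have h9 := finrank_span_eq_card ((ortho_li hv).comp
      (Subtype.val : {x : Fin n // x ∈ (↑(Finset.Ici jn) : Set (Fin n))} → Fin n)
      Subtype.val_injective)
    have h10 : Fintype.card {x : Fin n // x ∈ (↑(Finset.Ici jn) : Set (Fin n))}
        = n - (j : ℕ) := by
      simp only [Finset.coe_sort_coe, Fintype.card_coe, Fin.card_Ici, hjn, Fin.coe_castLE]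
    rw [hWdef, Set.image_eq_range]
    exact h9.trans h10
  have hmaprank : Module.finrank ℝ (S.map L) = (j : ℕ) + 1 := by
    rw [← hSrank]
    exact (LinearEquiv.finrank_eq (Submodule.equivMapOfInjective L hLinj S)).symm
  -- intersection nontrivial
  have hinf : S.map L ⊓ W ≠ ⊥ := by
    intro hbot
    have hsum := Submodule.finrank_sup_add_finrank_inf_eq (S.map L) W
    have hle : Module.finrank ℝ ↥(S.map L ⊔ W) ≤ n :=
      le_trans (Submodule.finrank_le _) (le_of_eq (Module.finrank_fin_fun ℝ))
    rw [hbot, finrank_bot, hmaprank, hWrank] at hsum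
    have hjk : (j : ℕ) < k := j.isLt
    omega
  obtain ⟨y, hy, hyne⟩ := Submodule.exists_mem_ne_zero_of_ne_bot hinf
  obtain ⟨hy1, hy2⟩ := Submodule.mem_inf.mp hy
  obtain ⟨x, hxS, hxy⟩ := Submodule.mem_map.mp hy1
  have hxne : x ≠ 0 := fun h => hyne (by rw [← hxy, h, map_zero])
  -- representations
  obtain ⟨a, hxa⟩ := mem_span_ortho hu (Finset.Iic j) hxS
  obtain ⟨b, hyb⟩ := mem_span_ortho hv (Finset.Ici jn) hy2
  -- Rayleigh bounds
  have hR1 : mu j * (x ⬝ᵥ x) ≤ x ⬝ᵥ (Q *ᵥ x) := by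
    rw [hxa]
    exact rayleigh_lower Q hu hueig (Finset.Iic j) (fun i hi => hmu (Finset.mem_Iic.mp hi)) a
  have hR2 : y ⬝ᵥ (T *ᵥ y) ≤ lam jn * (y ⬝ᵥ y) := by
    rw [hyb]
    exact rayleigh_upper T hv hveig (Finset.Ici jn) (fun i hi => hlam (Finset.mem_Ici.mp hi)) b
  -- transfer
  have hyx : y = U *ᵥ x := by rw [← hxy, hLapp]
  have hnorm : y ⬝ᵥ y = x ⬝ᵥ x := by rw [hyx, hiso]
  have hquad : y ⬝ᵥ (T *ᵥ y) = x ⬝ᵥ (Q *ᵥ x) := by rw [hyx, hcompat]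
  have hpos : 0 < x ⬝ᵥ x := by
    rcases lt_or_eq_of_le (Finset.sum_nonneg fun i _ => mul_self_nonneg (x i) :
      (0:ℝ) ≤ x ⬝ᵥ x) with h | h
    · exact h
    · exact absurd (dotProduct_self_eq_zero.mp h.symm) hxne
  have : mu j * (x ⬝ᵥ x) ≤ lam jn * (x ⬝ᵥ x) := by
    calc mu j * (x ⬝ᵥ x) ≤ x ⬝ᵥ (Q *ᵥ x) := hR1
    _ = y ⬝ᵥ (T *ᵥ y) := hquad.symm
    _ ≤ lam jn * (y ⬝ᵥ y) := hR2
    _ = lam jn * (x ⬝ᵥ x) := by rw [hnorm]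
  exact le_of_mul_le_mul_right this hpos
end

section
/- Let K be a 3×3 real symmetric matrix with nonnegative entries and all row sums equal to 1, whose characteristic polynomial is (X−1)(X−κ₂)(X−κ₃) with κ₃² ≤ κ₂², and set L := K². Then for every index i ∈ {1,2,3}, κ₃² ≤ (3 L_{ii} − 1)/2 ≤ κ₂². -/
set_option maxHeartbeats 1000000


open Matrix Polynomial

/-- If `K` is a 3×3 real symmetric matrix with nonnegative entries and row
sums 1, with characteristic polynomial `(X - 1)(X - κ₂)(X - κ₃)` where `κ₃² ≤ κ₂²`, and
`L := K²`, then `κ₃² ≤ (3 L_{ii} - 1)/2 ≤ κ₂²` for every index `i`. -/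
theorem diagonal_spectral_bound
    (K : Matrix (Fin 3) (Fin 3) ℝ) (hsymm : K.IsSymm)
    (hnonneg : ∀ i j, 0 ≤ K i j) (hrow : ∀ i, ∑ j, K i j = 1)
    (κ₂ κ₃ : ℝ) (hchar : K.charpoly = (X - 1) * (X - C κ₂) * (X - C κ₃))
    (hκ : κ₃ ^ 2 ≤ κ₂ ^ 2) :
    ∀ i : Fin 3,
      κ₃ ^ 2 ≤ (3 * (K ^ 2) i i - 1) / 2 ∧ (3 * (K ^ 2) i i - 1) / 2 ≤ κ₂ ^ 2 := by
  -- entrywise symmetry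
  have hs : ∀ i j, K j i = K i j := by
    intro i j
    conv_lhs => rw [← hsymm]
    rfl
  -- the all-ones matrix
  set J : Matrix (Fin 3) (Fin 3) ℝ := Matrix.of (fun _ _ => (1:ℝ)) with hJdef
  have hKJ : K * J = J := by
    ext i j
    simp [Matrix.mul_apply, hJdef, hrow i]
  have hJK : J * K = J := by
    ext i j
    simp only [Matrix.mul_apply, hJdef, Matrix.of_apply, one_mul]
    rw [Finset.sum_congr rfl (fun k _ => hs j k)]
    exact hrow j
  have hJJ : J * J = (3:ℝ) • J := by
    ext i j
    simp [Matrix.mul_apply, hJdef, Fin.sum_univ_three]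
  -- Cayley–Hamilton
  have hCH : (K - 1) * (K - κ₂ • 1) * (K - κ₃ • 1) = 0 := by
    have h := K.aeval_self_charpoly
    rw [hchar] at h
    simpa [_root_.map_sub, _root_.map_mul, aeval_X, aeval_C,
      Algebra.algebraMap_eq_smul_one] using h
  -- trace identities from the characteristic polynomial
  have h1 : K.charpoly = X^3 - C (K 0 0 + K 1 1 + K 2 2) * X^2
      + C (K 0 0 * K 1 1 - K 0 1 * K 1 0 + K 0 0 * K 2 2 - K 0 2 * K 2 0
          + K 1 1 * K 2 2 - K 1 2 * K 2 1) * X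
      - C (K 0 0 * K 1 1 * K 2 2 - K 0 0 * K 1 2 * K 2 1 - K 0 1 * K 1 0 * K 2 2
          + K 0 1 * K 1 2 * K 2 0 + K 0 2 * K 1 0 * K 2 1 - K 0 2 * K 1 1 * K 2 0) := by
    rw [Matrix.charpoly, Matrix.det_fin_three]
    rw [K.charmatrix_apply_eq 0, K.charmatrix_apply_eq 1, K.charmatrix_apply_eq 2,
      K.charmatrix_apply_ne 0 1 (by decide), K.charmatrix_apply_ne 0 2 (by decide),
      K.charmatrix_apply_ne 1 0 (by decide), K.charmatrix_apply_ne 1 2 (by decide),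
      K.charmatrix_apply_ne 2 0 (by decide), K.charmatrix_apply_ne 2 1 (by decide)]
    simp only [C_add, C_sub, C_mul]
    ring
  have h3 := h1.symm.trans hchar
  have e0 := congrArg (Polynomial.eval 0) h3
  have e1 := congrArg (Polynomial.eval 1) h3
  have e2 := congrArg (Polynomial.eval (-1)) h3
  simp only [eval_add, eval_sub, eval_mul, eval_pow, eval_C, eval_X, eval_one] at e0 e1 e2
  have t1 : K 0 0 + K 1 1 + K 2 2 = 1 + κ₂ + κ₃ := by
    linear_combination (-1/2 : ℝ) * e1 + (-1/2 : ℝ) * e2 + e0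
  have t2 : K 0 0 * K 1 1 - K 0 1 * K 1 0 + K 0 0 * K 2 2 - K 0 2 * K 2 0
      + K 1 1 * K 2 2 - K 1 2 * K 2 1 = κ₂ + κ₃ + κ₂ * κ₃ := by
    linear_combination (1/2 : ℝ) * e1 + (-1/2 : ℝ) * e2
  -- the auxiliary matrix B
  set μ : ℝ := (1 - κ₂) * (1 - κ₃) with hμ
  set B : Matrix (Fin 3) (Fin 3) ℝ := (K - κ₂ • 1) * (K - κ₃ • 1) - (μ/3) • J with hBdef
  have hBK : B * K = B := by
    have h1' : B * (K - 1) = 0 := by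
      have hre : (K - κ₂ • 1) * (K - κ₃ • 1) * (K - 1)
          = (K - 1) * (K - κ₂ • 1) * (K - κ₃ • 1) := by
        noncomm_ring
        module
      have hJ1 : J * (K - 1) = 0 := by rw [mul_sub, hJK, mul_one, sub_self]
      rw [hBdef, sub_mul, hre, hCH, smul_mul_assoc, hJ1, smul_zero, sub_self]
    rwa [mul_sub, mul_one, sub_eq_zero] at h1'
  have hxJ : ∀ x : ℝ, (K - x • 1) * J = (1 - x) • J := by
    intro x
    rw [sub_mul, smul_mul_assoc, one_mul, hKJ]
    module
  have hJx : ∀ x : ℝ, J * (K - x • 1) = (1 - x) • J := by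
    intro x
    rw [mul_sub, mul_smul_comm, mul_one, hJK]
    module
  have hBJ : B * J = 0 := by
    rw [hBdef, sub_mul, mul_assoc, hxJ, mul_smul_comm, hxJ, smul_mul_assoc, hJJ, hμ]
    module
  have hbc : (K - κ₂ • 1) * (K - κ₃ • 1) = K * K - (κ₂ + κ₃) • K + (κ₂ * κ₃) • 1 := by
    noncomm_ring
    module
  have hB2 : B * B = μ • B := by
    nth_rewrite 2 [hBdef]
    rw [mul_sub, mul_smul_comm, hBJ, smul_zero, sub_zero, hbc, mul_add, mul_sub,
      ← mul_assoc, hBK, hBK, mul_smul_comm, mul_smul_comm, mul_one, hBK, hμ]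
    module
  -- B is symmetric
  have hBs : ∀ i j, B j i = B i j := by
    have hT : Bᵀ = B := by
      rw [hBdef, transpose_sub, transpose_smul, transpose_mul, transpose_sub,
        transpose_sub, transpose_smul, transpose_smul, transpose_one, hsymm]
      have hJT : Jᵀ = J := by ext i j; rfl
      rw [hJT]
      have : (K - κ₃ • 1) * (K - κ₂ • 1) = (K - κ₂ • 1) * (K - κ₃ • 1) := by
        noncomm_ring
        module
      rw [this]
    intro i j
    have h := congrFun (congrFun hT j) i
    rw [Matrix.transpose_apply] at h
    exact h.symm
  -- trace of B is zero
  have htrB : B 0 0 + B 1 1 + B 2 2 = 0 := by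
    have hBalt : B = K * K - (κ₂ + κ₃) • K + (κ₂ * κ₃) • 1 - (μ/3) • J := by
      rw [hBdef, hbc]
    have hB00 := congrFun (congrFun hBalt 0) 0
    have hB11 := congrFun (congrFun hBalt 1) 1
    have hB22 := congrFun (congrFun hBalt 2) 2
    simp only [Matrix.sub_apply, Matrix.add_apply, Matrix.smul_apply, Matrix.mul_apply,
      Fin.sum_univ_three, Matrix.one_apply_eq, Matrix.of_apply, hJdef, smul_eq_mul,
      mul_one] at hB00 hB11 hB22
    rw [hB00, hB11, hB22, hμ]
    rw [hs 0 1, hs 0 2, hs 1 2]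
    linear_combination (K 0 0 + K 1 1 + K 2 2 + 1) * t1 - 2 * t2
      + (-2 * K 0 1) * (hs 0 1) + (-2 * K 0 2) * (hs 0 2) + (-2 * K 1 2) * (hs 1 2)
  -- B = 0
  have hB0 : B = 0 := by
    have htr2 := congrArg Matrix.trace hB2
    simp only [Matrix.trace, Matrix.diag, Matrix.mul_apply, Matrix.smul_apply,
      Fin.sum_univ_three, smul_eq_mul] at htr2
    rw [hBs 0 1, hBs 0 2, hBs 1 2] at htr2
    have hmu0 : μ * B 0 0 + μ * B 1 1 + μ * B 2 2 = 0 := by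
      rw [← mul_add, ← mul_add, htrB, mul_zero]
    have h9 : B 0 0 ^ 2 + B 0 1 ^ 2 + B 0 2 ^ 2 + B 0 1 ^ 2 + B 1 1 ^ 2 + B 1 2 ^ 2
        + B 0 2 ^ 2 + B 1 2 ^ 2 + B 2 2 ^ 2 = 0 := by
      linear_combination htr2 + hmu0
    have hz : ∀ a b : Fin 3, B a b ^ 2 ≤ 0 → B a b = 0 := by
      intro a b h
      exact pow_eq_zero_iff (two_ne_zero) |>.mp (le_antisymm h (sq_nonneg _))
    have q00 := sq_nonneg (B 0 0)
    have q01 := sq_nonneg (B 0 1)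
    have q02 := sq_nonneg (B 0 2)
    have q11 := sq_nonneg (B 1 1)
    have q12 := sq_nonneg (B 1 2)
    have q22 := sq_nonneg (B 2 2)
    have h00 : B 0 0 = 0 := hz 0 0 (by linarith [h9, q01, q02, q11, q12, q22])
    have h01 : B 0 1 = 0 := hz 0 1 (by linarith [h9, q00, q02, q11, q12, q22])
    have h02 : B 0 2 = 0 := hz 0 2 (by linarith [h9, q00, q01, q11, q12, q22])
    have h11 : B 1 1 = 0 := hz 1 1 (by linarith [h9, q00, q01, q02, q12, q22])
    have h12 : B 1 2 = 0 := hz 1 2 (by linarith [h9, q00, q01, q02, q11, q22])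
    have h22 : B 2 2 = 0 := hz 2 2 (by linarith [h9, q00, q01, q02, q11, q12])
    ext i j
    fin_cases i <;> fin_cases j <;> simp only [Matrix.zero_apply, Fin.isValue]
    all_goals first
    | exact h00
    | exact h01
    | exact h02
    | exact h11
    | exact h12
    | exact h22
    | exact (hBs 0 1).trans h01
    | exact (hBs 0 2).trans h02
    | exact (hBs 1 2).trans h12
  -- the key quadratic relation for K
  have hK2 : K * K = (κ₂ + κ₃) • K - (κ₂ * κ₃) • 1 + (μ/3) • J := by
    have hbc0 : (K - κ₂ • 1) * (K - κ₃ • 1) = (μ/3) • J := by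
      have := hB0
      rw [hBdef] at this
      exact sub_eq_zero.mp this
    rw [← hbc0]
    noncomm_ring
    module
  -- the quadratic-in-eigenvalue matrices
  have hAgen : ∀ x y : ℝ, K * K = (x + y) • K - (x * y) • 1 + ((1-x)*(1-y)/3) • J →
      (K * K - y^2 • 1 + ((y^2-1)/3) • J) * (K * K - y^2 • 1 + ((y^2-1)/3) • J)
        = (x^2 - y^2) • (K * K - y^2 • 1 + ((y^2-1)/3) • J) := by
    intro x y h
    have hA : K * K - y^2 • 1 + ((y^2-1)/3) • J
        = (x + y) • (K - y • 1) + (((y-1)*(x+y))/3) • J := by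
      rw [h]
      module
    rw [hA]
    have hyy : (K - y • 1) * (K - y • 1) = (x - y) • (K - y • 1) + ((1-x)*(1-y)/3) • J := by
      have : (K - y • 1) * (K - y • 1) = K * K - (2*y) • K + (y^2) • 1 := by
        simp only [sub_mul, mul_sub, smul_mul_assoc, mul_smul_comm, mul_one, one_mul,
          smul_smul]
        module
      rw [this, h]
      module
    simp only [add_mul, mul_add, smul_mul_assoc, mul_smul_comm, hyy, hxJ, hJx, hJJ,
      smul_add, smul_smul]
    module
  have hK2' : K * K = (κ₃ + κ₂) • K - (κ₃ * κ₂) • 1 + ((1-κ₃)*(1-κ₂)/3) • J := by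
    rw [hK2, hμ]
    module
  have hAA3 := hAgen κ₂ κ₃ (by rw [hK2, hμ])
  have hAA2 := hAgen κ₃ κ₂ hK2'
  -- symmetry of those matrices
  have hKKs : ∀ i j, (K * K) j i = (K * K) i j := by
    intro i j
    simp only [Matrix.mul_apply]
    refine Finset.sum_congr rfl fun k _ => ?_
    rw [hs j k, hs i k]
    · ring
  have hAsym : ∀ z : ℝ, ∀ i j, (K * K - z • 1 + ((z-1)/3) • J) j i
      = (K * K - z • 1 + ((z-1)/3) • J) i j := by
    intro z i j
    simp only [Matrix.add_apply, Matrix.sub_apply, Matrix.smul_apply, hJdef, Matrix.of_apply,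
      smul_eq_mul, mul_one]
    rw [hKKs i j, Matrix.one_apply, Matrix.one_apply]
    by_cases hij : i = j
    · simp [hij]
    · simp [hij, Ne.symm hij]
  -- key positivity lemma
  have key : ∀ (M : Matrix (Fin 3) (Fin 3) ℝ) (lam : ℝ), (∀ i j, M j i = M i j) →
      M * M = lam • M → 0 ≤ lam → ∀ i, 0 ≤ M i i := by
    intro M lam hMs hMM hlam i
    have h1' : ∑ j, M i j ^ 2 = lam * M i i := by
      have h := congrFun (congrFun hMM i) i
      simp only [Matrix.mul_apply, Matrix.smul_apply, smul_eq_mul] at h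
      rw [← h]
      refine Finset.sum_congr rfl fun j _ => ?_
      rw [hMs i j, pow_two]
    rcases eq_or_lt_of_le hlam with h0 | hpos
    · have hsum : ∑ j, M i j ^ 2 = 0 := by rw [h1', ← h0, zero_mul]
      have := (Finset.sum_eq_zero_iff_of_nonneg (fun j _ => sq_nonneg (M i j))).mp
        hsum i (Finset.mem_univ i)
      exact le_of_eq (sq_eq_zero_iff.mp this).symm
    · have hnn : 0 ≤ lam * M i i := h1' ▸ Finset.sum_nonneg fun j _ => sq_nonneg _
      nlinarith [hnn, hpos]
  intro i
  have hlow := key (K * K - κ₃^2 • 1 + ((κ₃^2-1)/3) • J) (κ₂^2 - κ₃^2)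
    (hAsym (κ₃^2)) hAA3 (by linarith) i
  have hupp' := key (-(K * K - κ₂^2 • 1 + ((κ₂^2-1)/3) • J)) (κ₂^2 - κ₃^2)
    (fun a b => by simp only [Matrix.neg_apply]; rw [hAsym (κ₂^2) a b])
    (by rw [neg_mul_neg, hAA2, smul_neg, ← neg_smul]; ring_nf) (by linarith) i
  have hJii : J i i = 1 := rfl
  have h1ii : (1 : Matrix (Fin 3) (Fin 3) ℝ) i i = 1 := Matrix.one_apply_eq i
  simp only [Matrix.add_apply, Matrix.sub_apply, Matrix.smul_apply, Matrix.neg_apply,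
    hJii, h1ii, smul_eq_mul, mul_one] at hlow hupp'
  have hp2 : (K ^ 2) i i = (K * K) i i := by rw [pow_two]
  constructor
  · rw [hp2]; linarith
  · rw [hp2]; linarith
end

section
/- Let K be a 3×3 real symmetric matrix with nonnegative entries and all row sums equal to 1, whose characteristic polynomial is (X−1)(X−κ₂)(X−κ₃), and set L := K². Let t₁, t₂, t₃ ≥ 0 and t_* := max(t₁,t₂,t₃). Assume κ₂² > t_* > κ₃², and assume that (3 L_{rr} − 1)/2 < κ₂² for every r with t_r = t_*. Then for every r ∈ {1,2,3}: t_r · (3 L_{rr} − 1)/2 < κ₂² · t_*. -/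
open Matrix Polynomial

/-- Let `K` be a 3×3 symmetric stochastic matrix with characteristic
polynomial `(X - 1)(X - κ₂)(X - κ₃)`, and `L := K²`. Let `t₁, t₂, t₃ ≥ 0` with
`t_* = max(t₁, t₂, t₃)`. If `κ₂² > t_* > κ₃²` and `(3 L_{rr} - 1)/2 < κ₂²` for every `r`
with `t_r = t_*`, then `t_r (3 L_{rr} - 1)/2 < κ₂² t_*` for every `r`. -/
theorem family_114_gap
    (K : Matrix (Fin 3) (Fin 3) ℝ) (hsymm : K.IsSymm)
    (hnonneg : ∀ i j, 0 ≤ K i j) (hrow : ∀ i, ∑ j, K i j = 1)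
    (κ₂ κ₃ : ℝ) (hchar : K.charpoly = (X - 1) * (X - C κ₂) * (X - C κ₃))
    (t : Fin 3 → ℝ) (ht : ∀ r, 0 ≤ t r)
    (hupper : κ₂ ^ 2 > max (max (t 0) (t 1)) (t 2))
    (hlower : max (max (t 0) (t 1)) (t 2) > κ₃ ^ 2)
    (hnondeg : ∀ r : Fin 3, t r = max (max (t 0) (t 1)) (t 2) →
      (3 * (K ^ 2) r r - 1) / 2 < κ₂ ^ 2) :
    ∀ r : Fin 3,
      t r * (3 * (K ^ 2) r r - 1) / 2 < κ₂ ^ 2 * max (max (t 0) (t 1)) (t 2) := by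
  have hsym : ∀ i j, K j i = K i j := fun i j => hsymm.apply i j
  set p := K 0 1 with hp
  set q := K 0 2 with hq
  set r := K 1 2 with hr
  have h10 : K 1 0 = p := hsym 0 1
  have h20 : K 2 0 = q := hsym 0 2
  have h21 : K 2 1 = r := hsym 1 2
  have ha : K 0 0 = 1 - p - q := by
    have h := hrow 0; rw [Fin.sum_univ_three] at h; linarith
  have hb : K 1 1 = 1 - p - r := by
    have h := hrow 1; rw [Fin.sum_univ_three, h10] at h; linarith
  have hc : K 2 2 = 1 - q - r := by
    have h := hrow 2; rw [Fin.sum_univ_three, h20, h21] at h; linarith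
  have hpoly : (X - 1) * (X - C κ₂) * (X - C κ₃) =
      X ^ 3 - C (1 + κ₂ + κ₃) * X ^ 2 + C (κ₂ + κ₃ + κ₂ * κ₃) * X - C (κ₂ * κ₃) := by
    simp only [C_add, C_mul, C_1]
    ring
  have hE1 : (1 - p - q) + (1 - p - r) + (1 - q - r) = 1 + κ₂ + κ₃ := by
    have h := K.trace_eq_neg_charpoly_coeff
    rw [hchar, hpoly] at h
    simp only [Fintype.card_fin, coeff_sub, coeff_add, coeff_X_pow, coeff_C_mul, coeff_C,
      coeff_X, Matrix.trace_fin_three, ha, hb, hc] at h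
    norm_num at h
    linarith
  have hE3 : (1 - p - q) * ((1 - p - r) * (1 - q - r)) - (1 - p - q) * (r * r) -
      p * (p * (1 - q - r)) + p * (r * q) + q * (p * r) - q * ((1 - p - r) * q)
      = κ₂ * κ₃ := by
    have h := K.det_eq_sign_charpoly_coeff
    rw [hchar, hpoly, Matrix.det_fin_three, ha, hb, hc, h10, h20, h21] at h
    simp only [Fintype.card_fin, coeff_sub, coeff_add, coeff_X_pow, coeff_C_mul, coeff_C,
      coeff_X] at h
    norm_num at h
    linarith
  have hκ : κ₃ ^ 2 < κ₂ ^ 2 := lt_trans hlower hupper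
  have hκpos : 0 < κ₂ ^ 2 := lt_of_le_of_lt (sq_nonneg κ₃) hκ
  have key0 : (κ₂^2 - κ₃^2) * (κ₂^2 - ((1-p-q)*(1-p-q) + p*p + q*q) + (1-κ₂^2)/3) = (κ₂^2 - ((1-p-q)*(1-p-q) + p*p + q*q) + (1-κ₂^2)/3)^2 + (-((1-p-q)*p + p*(1-p-r) + q*r) + (1-κ₂^2)/3)^2 + (-((1-p-q)*q + p*r + q*(1-q-r)) + (1-κ₂^2)/3)^2 := by
    linear_combination ((2/3)*κ₃*κ₂^2 + (-2)*κ₃*p^2 + (-2)*κ₃*p*q + (2)*κ₃*p + (-2)*κ₃*q^2 + (2)*κ₃*q + (-2/3)*κ₃ + (-2)*κ₂*p^2 + (-4)*κ₂*p*q + (-2)*κ₂*p*r + (10/3)*κ₂*p + (-2)*κ₂*q^2 + (-2)*κ₂*q*r + (10/3)*κ₂*q + (4/3)*κ₂*r + (-4/3)*κ₂ + (4)*p^3 + (8)*p^2*q + (4)*p^2*r + (-8)*p^2 + (8)*p*q^2 + (4)*p*q*r + (-12)*p*q + (-4)*p*r + (16/3)*p + (4)*q^3 + (4)*q^2*r +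 (-8)*q^2 + (-4)*q*r + (16/3)*q + (4/3)*r + (-4/3)) * hE1 + ((-2/3)*κ₂^2 + (-4/3)*κ₂*p + (-4/3)*κ₂*q + (-4/3)*κ₂*r + (4/3)*κ₂ + (4)*p^2 + (6)*p*q + (2)*p*r + (-16/3)*p + (4)*q^2 + (2)*q*r + (-16/3)*q + (-4/3)*r + (2)) * hE3
  have key1 : (κ₂^2 - κ₃^2) * (κ₂^2 - (p*p + (1-p-r)*(1-p-r) + r*r) + (1-κ₂^2)/3) = (-(p*(1-p-q) + (1-p-r)*p + r*q) + (1-κ₂^2)/3)^2 + (κ₂^2 - (p*p + (1-p-r)*(1-p-r) + r*r) + (1-κ₂^2)/3)^2 + (-(p*q + (1-p-r)*r + r*(1-q-r)) + (1-κ₂^2)/3)^2 := by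
    linear_combination ((2/3)*κ₃*κ₂^2 + (-2)*κ₃*p^2 + (-2)*κ₃*p*r + (2)*κ₃*p + (-2)*κ₃*r^2 + (2)*κ₃*r + (-2/3)*κ₃ + (-2)*κ₂*p^2 + (-2)*κ₂*p*q + (-4)*κ₂*p*r + (10/3)*κ₂*p + (-2)*κ₂*q*r + (4/3)*κ₂*q + (-2)*κ₂*r^2 + (10/3)*κ₂*r + (-4/3)*κ₂ + (4)*p^3 + (4)*p^2*q + (8)*p^2*r + (-8)*p^2 + (4)*p*q*r + (-4)*p*q + (8)*p*r^2 + (-12)*p*r + (16/3)*p + (4)*q*r^2 + (-4)*q*r + (4/3)*q + (4)*r^3 + (-8)*r^2 + (16/3)*r + (-4/3)) * hE1 + ((-2/3)*κ₂^2 + (-4/3)*κ₂*p + (-4/3)*κ₂*q + (-4/3)*κ₂*r + (4/3)*κ₂ + (4)*p^2 + (2)*p*q + (6)*p*r + (-16/3)*p + (2)*q*r + (-4/3)*q + (4)*r^2 + (-16/3)*r + (2)) * hE3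
  have key2 : (κ₂^2 - κ₃^2) * (κ₂^2 - (q*q + r*r + (1-q-r)*(1-q-r)) + (1-κ₂^2)/3) = (-(q*(1-p-q) + r*p + (1-q-r)*q) + (1-κ₂^2)/3)^2 + (-(q*p + r*(1-p-r) + (1-q-r)*r) + (1-κ₂^2)/3)^2 + (κ₂^2 - (q*q + r*r + (1-q-r)*(1-q-r)) + (1-κ₂^2)/3)^2 := by
    linear_combination ((2/3)*κ₃*κ₂^2 + (-2)*κ₃*q^2 + (-2)*κ₃*q*r + (2)*κ₃*q + (-2)*κ₃*r^2 + (2)*κ₃*r + (-2/3)*κ₃ + (-2)*κ₂*p*q + (-2)*κ₂*p*r + (4/3)*κ₂*p + (-2)*κ₂*q^2 + (-4)*κ₂*q*r + (10/3)*κ₂*q + (-2)*κ₂*r^2 + (10/3)*κ₂*r + (-4/3)*κ₂ + (4)*p*q^2 + (4)*p*q*r + (-4)*p*q + (4)*p*r^2 + (-4)*p*r + (4/3)*p + (4)*q^3 + (8)*q^2*r + (-8)*q^2 + (8)*q*r^2 + (-12)*q*r + (16/3)*q + (4)*r^3 + (-8)*r^2 + (16/3)*r + (-4/3)) * hE1 +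 ((-2/3)*κ₂^2 + (-4/3)*κ₂*p + (-4/3)*κ₂*q + (-4/3)*κ₂*r + (4/3)*κ₂ + (2)*p*q + (2)*p*r + (-4/3)*p + (4)*q^2 + (6)*q*r + (-16/3)*q + (4)*r^2 + (-16/3)*r + (2)) * hE3
  have hL00 : (K ^ 2) 0 0 = (1-p-q)*(1-p-q) + p*p + q*q := by
    rw [pow_two]
    simp only [Matrix.mul_apply, Fin.sum_univ_three, ha, h10, h20]
    rfl
  have hL11 : (K ^ 2) 1 1 = p*p + (1-p-r)*(1-p-r) + r*r := by
    rw [pow_two]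
    simp only [Matrix.mul_apply, Fin.sum_univ_three, hb, h10, h21]
    rfl
  have hL22 : (K ^ 2) 2 2 = q*q + r*r + (1-q-r)*(1-q-r) := by
    rw [pow_two]
    simp only [Matrix.mul_apply, Fin.sum_univ_three, hc, h20, h21]
    rfl
  have hS0 : (0:ℝ) ≤ (κ₂^2 - ((1-p-q)*(1-p-q) + p*p + q*q) + (1-κ₂^2)/3) := by
    have hmul : (κ₂^2 - κ₃^2) * 0 ≤ (κ₂^2 - κ₃^2) * (κ₂^2 - ((1-p-q)*(1-p-q) + p*p + q*q) + (1-κ₂^2)/3) := by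
      rw [mul_zero, key0]
      positivity
    exact le_of_mul_le_mul_left hmul (by linarith)
  have hS1 : (0:ℝ) ≤ (κ₂^2 - (p*p + (1-p-r)*(1-p-r) + r*r) + (1-κ₂^2)/3) := by
    have hmul : (κ₂^2 - κ₃^2) * 0 ≤ (κ₂^2 - κ₃^2) * (κ₂^2 - (p*p + (1-p-r)*(1-p-r) + r*r) + (1-κ₂^2)/3) := by
      rw [mul_zero, key1]
      positivity
    exact le_of_mul_le_mul_left hmul (by linarith)
  have hS2 : (0:ℝ) ≤ (κ₂^2 - (q*q + r*r + (1-q-r)*(1-q-r)) + (1-κ₂^2)/3) := by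
    have hmul : (κ₂^2 - κ₃^2) * 0 ≤ (κ₂^2 - κ₃^2) * (κ₂^2 - (q*q + r*r + (1-q-r)*(1-q-r)) + (1-κ₂^2)/3) := by
      rw [mul_zero, key2]
      positivity
    exact le_of_mul_le_mul_left hmul (by linarith)
  have hbnd : ∀ i : Fin 3, (3 * (K ^ 2) i i - 1) / 2 ≤ κ₂ ^ 2 := by
    intro i
    fin_cases i
    · rw [show ((⟨0, by norm_num⟩ : Fin 3)) = (0 : Fin 3) from rfl, hL00]; linarith [hS0]
    · rw [show ((⟨1, by norm_num⟩ : Fin 3)) = (1 : Fin 3) from rfl, hL11]; linarith [hS1]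
    · rw [show ((⟨2, by norm_num⟩ : Fin 3)) = (2 : Fin 3) from rfl, hL22]; linarith [hS2]
  intro i
  have hTpos : 0 < max (max (t 0) (t 1)) (t 2) :=
    lt_of_le_of_lt (sq_nonneg κ₃) hlower
  have hti : t i ≤ max (max (t 0) (t 1)) (t 2) := by
    fin_cases i
    · exact le_max_of_le_left (le_max_left _ _)
    · exact le_max_of_le_left (le_max_right _ _)
    · exact le_max_right _ _
  rcases eq_or_lt_of_le hti with heq | hlt
  · have hstrict := hnondeg i heq
    rw [heq]
    linarith [mul_lt_mul_of_pos_left hstrict hTpos]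
  · have h1 : t i * ((3 * (K ^ 2) i i - 1) / 2) ≤ t i * κ₂ ^ 2 :=
      mul_le_mul_of_nonneg_left (hbnd i) (ht i)
    have h2 : t i * κ₂ ^ 2 < max (max (t 0) (t 1)) (t 2) * κ₂ ^ 2 :=
      mul_lt_mul_of_pos_right hlt hκpos
    linarith [h1, h2]
end

section
/- Let K be a 3×3 real symmetric matrix with nonnegative entries and all row sums equal to 1, whose characteristic polynomial is (X−1)(X−κ₂)(X−κ₃), and set L := K². Let t₁, t₂, t₃ ≥ 0 and t_* := max(t₁,t₂,t₃). Assume κ₂² > t_* > κ₃². Then for all indices p, r ∈ {1,2,3}: (1/3)·(det L + t_r·(3 L_{pp} − 1)) < κ₂² · t_*. -/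
open Matrix Polynomial

private lemma aux_pos (A P E D : ℝ) (hA : 0 ≤ A) (hAPD : A = P * D)
    (hED : E ^ 2 ≤ D ^ 2) : 0 ≤ A + P * E := by
  have h1 : (P * E) ^ 2 ≤ A ^ 2 := by
    have := mul_le_mul_of_nonneg_left hED (sq_nonneg P)
    calc (P * E) ^ 2 = P ^ 2 * E ^ 2 := by ring
    _ ≤ P ^ 2 * D ^ 2 := this
    _ = A ^ 2 := by rw [hAPD]; ring
  by_contra h
  push_neg at h
  have h2 : P * E < -A := by linarith
  have h3 : A ^ 2 < (P * E) ^ 2 := by nlinarith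
  linarith

private lemma key_lem (μ ν S E d : ℝ) (hsq : ν ^ 2 ≤ μ ^ 2)
    (hE : (μ + ν) * E = (μ + ν) ^ 2 - 2 * (μ * ν) - S)
    (hD : (μ + ν) ^ 2 - 4 * (μ * ν) = E ^ 2 + 3 * d ^ 2) : S ≤ 2 * μ ^ 2 := by
  have hED : E ^ 2 ≤ (μ - ν) ^ 2 := by nlinarith [sq_nonneg d]
  have h := aux_pos (μ ^ 2 - ν ^ 2) (μ + ν) E (μ - ν) (by linarith) (by ring) hED
  nlinarith [h, hE]

private lemma fin_lem (μ ν S t T : ℝ) (hS0 : 0 ≤ S) (hS2 : S ≤ 2 * μ ^ 2)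
    (ht0 : 0 ≤ t) (htT : t ≤ T) (hνT : ν ^ 2 < T) (hTμ : T < μ ^ 2) :
    (1 / 3) * ((μ * ν) ^ 2 + t * S) < μ ^ 2 * T := by
  have hT0 : 0 < T := lt_of_le_of_lt (sq_nonneg ν) hνT
  have hμ0 : 0 < μ ^ 2 := lt_trans hT0 hTμ
  have h1 : t * S ≤ T * S := mul_le_mul_of_nonneg_right htT hS0
  have h2 : T * S ≤ T * (2 * μ ^ 2) := mul_le_mul_of_nonneg_left hS2 hT0.le
  have h3 : (μ * ν) ^ 2 < μ ^ 2 * T := by nlinarith [mul_lt_mul_of_pos_left hνT hμ0]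
  nlinarith [h1, h2, h3]

set_option maxHeartbeats 2000000 in
/-- Let `K` be a 3×3 symmetric stochastic matrix with characteristic
polynomial `(X - 1)(X - κ₂)(X - κ₃)`, and `L := K²`. Let `t₁, t₂, t₃ ≥ 0` with
`t_* = max(t₁, t₂, t₃)`. If `κ₂² > t_* > κ₃²`, then
`(1/3)(det L + t_r (3 L_{pp} - 1)) < κ₂² t_*` for all indices `p, r`. -/
theorem family_123_gap
    (K : Matrix (Fin 3) (Fin 3) ℝ) (hsymm : K.IsSymm)
    (hnonneg : ∀ i j, 0 ≤ K i j) (hrow : ∀ i, ∑ j, K i j = 1)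
    (κ₂ κ₃ : ℝ) (hchar : K.charpoly = (X - 1) * (X - C κ₂) * (X - C κ₃))
    (t : Fin 3 → ℝ) (ht : ∀ r, 0 ≤ t r)
    (hupper : κ₂ ^ 2 > max (max (t 0) (t 1)) (t 2))
    (hlower : max (max (t 0) (t 1)) (t 2) > κ₃ ^ 2) :
    ∀ p r : Fin 3,
      (1 / 3) * ((K ^ 2).det + t r * (3 * (K ^ 2) p p - 1))
        < κ₂ ^ 2 * max (max (t 0) (t 1)) (t 2) := by
  intro p r
  set T : ℝ := max (max (t 0) (t 1)) (t 2) with hT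
  -- coefficients of the factored polynomial
  have hexp : (X - 1) * (X - C κ₂) * (X - C κ₃)
      = X ^ 3 - C (κ₂ + κ₃ + 1) * X ^ 2 + C (κ₂ + κ₃ + κ₂ * κ₃) * X - C (κ₂ * κ₃) := by
    simp only [C_add, C_mul, C_1]
    ring
  -- trace
  have htrK : K.trace = 1 + κ₂ + κ₃ := by
    have h := Matrix.trace_eq_neg_charpoly_coeff K
    rw [hchar, hexp] at h
    simp only [coeff_add, coeff_sub, coeff_C_mul, coeff_X_pow, coeff_X, coeff_C] at h
    norm_num at h
    linarith
  have hdetK : K.det = κ₂ * κ₃ := by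
    have h := Matrix.det_eq_sign_charpoly_coeff K
    rw [hchar, hexp] at h
    simp only [coeff_add, coeff_sub, coeff_C_mul, coeff_X_pow, coeff_X, coeff_C] at h
    norm_num at h
    linarith
  have hdet2 : (K ^ 2).det = (κ₂ * κ₃) ^ 2 := by
    rw [Matrix.det_pow, hdetK]
  -- entries
  have hs10 : K 1 0 = K 0 1 := hsymm.apply 0 1
  have hs20 : K 2 0 = K 0 2 := hsymm.apply 0 2
  have hs21 : K 2 1 = K 1 2 := hsymm.apply 1 2
  have r0 : K 0 0 + K 0 1 + K 0 2 = 1 := by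
    have := hrow 0; rwa [Fin.sum_univ_three] at this
  have r1 : K 0 1 + K 1 1 + K 1 2 = 1 := by
    have := hrow 1; rwa [Fin.sum_univ_three, hs10] at this
  have r2 : K 0 2 + K 1 2 + K 2 2 = 1 := by
    have := hrow 2; rwa [Fin.sum_univ_three, hs20, hs21] at this
  have htr : K 0 0 + K 1 1 + K 2 2 = 1 + κ₂ + κ₃ := by
    rwa [Matrix.trace_fin_three] at htrK
  have hdet : K 0 0 * K 1 1 * K 2 2 - K 0 0 * K 1 2 * K 1 2 - K 0 1 * K 0 1 * K 2 2
      + K 0 1 * K 1 2 * K 0 2 + K 0 2 * K 0 1 * K 1 2 - K 0 2 * K 1 1 * K 0 2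
      = κ₂ * κ₃ := by
    rw [Matrix.det_fin_three, hs10, hs20, hs21] at hdetK
    linarith [hdetK]
  -- t r ≤ T and positivity facts
  have htrT : t r ≤ T := by
    fin_cases r
    · exact le_trans (le_max_left _ _) (le_max_left _ _)
    · exact le_trans (le_max_right _ _) (le_max_left _ _)
    · exact le_max_right _ _
  have hsq : κ₃ ^ 2 ≤ κ₂ ^ 2 := le_of_lt (lt_trans hlower hupper)
  -- abbreviations
  set a := K 0 0 with ha
  set b := K 1 1 with hb
  set c := K 2 2 with hc
  set u := K 0 1 with hu
  set v := K 0 2 with hv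
  set w := K 1 2 with hw
  -- diagonal of K^2 per case
  have hmain : ∀ (S : ℝ), 0 ≤ S → S ≤ 2 * κ₂ ^ 2 →
      (1 / 3) * ((K ^ 2).det + t r * S) < κ₂ ^ 2 * T := by
    intro S hS0 hS2
    rw [hdet2]
    exact fin_lem κ₂ κ₃ S (t r) T hS0 hS2 (ht r) htrT hlower hupper
  fin_cases p
  · have hL : (K ^ 2) 0 0 = a * a + u * u + v * v := by
      rw [pow_two, Matrix.mul_apply, Fin.sum_univ_three, hs10, hs20]
    show 1 / 3 * ((K ^ 2).det + t r * (3 * (K ^ 2) 0 0 - 1)) < κ₂ ^ 2 * T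
    rw [hL]
    apply hmain
    · nlinarith [sq_nonneg (a - u), sq_nonneg (a - v), sq_nonneg (u - v), r0]
    · apply key_lem κ₂ κ₃ _ ((κ₂ + κ₃) + 1 - 3 * a) (u - v) hsq
      · linear_combination (3 * a - 1) * htr + (-2) * hdet
          + (4 - 2 * w ^ 2 - 3 * c - 3 * b + 2 * b * c) * r0
          + (-2 + 3 * v - 2 * v ^ 2 + 3 * u + 2 * c - 2 * c * v - 2 * c * u) * r1
          + (-2 * w + v + 2 * v * w - u + 2 * u * w + 2 * u * v) * r2
      · linear_combination (2 * (1 - 3 * a)) * htr + 4 * hdet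
          + (-5 + 4 * w ^ 2 + 3 * v + 3 * u + 6 * c + 6 * b - 4 * b * c - 3 * a) * r0
          + (4 - 6 * v + 4 * v ^ 2 - 6 * u - 4 * c + 4 * c * v + 4 * c * u) * r1
          + (4 * w - 2 * v - 4 * v * w + 2 * u - 4 * u * w - 4 * u * v) * r2
  · have hL : (K ^ 2) 1 1 = u * u + b * b + w * w := by
      rw [pow_two, Matrix.mul_apply, Fin.sum_univ_three, hs10, hs21]
    show 1 / 3 * ((K ^ 2).det + t r * (3 * (K ^ 2) 1 1 - 1)) < κ₂ ^ 2 * T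
    rw [hL]
    apply hmain
    · nlinarith [sq_nonneg (b - u), sq_nonneg (b - w), sq_nonneg (u - w), r1]
    · apply key_lem κ₂ κ₃ _ ((κ₂ + κ₃) + 1 - 3 * b) (u - w) hsq
      · linear_combination (3 * b - 1) * htr + (-2) * hdet
          + (1 - 2 * w ^ 2 - 3 * b + 2 * b * c) * r0
          + (1 + 3 * v - 2 * v ^ 2 + 3 * u - c - 2 * c * v - 2 * c * u) * r1
          + (w - 2 * v + 2 * v * w - u + 2 * u * w + 2 * u * v) * r2
      · linear_combination (2 * (1 - 3 * b)) * htr + 4 * hdet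
          + (-2 + 4 * w ^ 2 + 6 * b - 4 * b * c) * r0
          + (1 + 3 * w - 6 * v + 4 * v ^ 2 - 3 * u + 2 * c + 4 * c * v + 4 * c * u - 3 * b) * r1
          + (-2 * w + 4 * v - 4 * v * w + 2 * u - 4 * u * w - 4 * u * v) * r2
  · have hL : (K ^ 2) 2 2 = v * v + w * w + c * c := by
      rw [pow_two, Matrix.mul_apply, Fin.sum_univ_three, hs20, hs21]
    show 1 / 3 * ((K ^ 2).det + t r * (3 * (K ^ 2) 2 2 - 1)) < κ₂ ^ 2 * T
    rw [hL]
    apply hmain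
    · nlinarith [sq_nonneg (c - v), sq_nonneg (c - w), sq_nonneg (v - w), r2]
    · apply key_lem κ₂ κ₃ _ ((κ₂ + κ₃) + 1 - 3 * c) (v - w) hsq
      · linear_combination (3 * c - 1) * htr + (-2) * hdet
          + (1 - 2 * w ^ 2 - 3 * c + 2 * b * c) * r0
          + (1 - 2 * v ^ 2 - c - 2 * c * v - 2 * c * u) * r1
          + (w + v + 2 * v * w + 2 * u + 2 * u * w + 2 * u * v) * r2
      · linear_combination (2 * (1 - 3 * c)) * htr + 4 * hdet
          + (-2 + 4 * w ^ 2 + 6 * c - 4 * b * c) * r0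
          + (-2 + 4 * v ^ 2 + 2 * c + 4 * c * v + 4 * c * u) * r1
          + (3 + w + v - 4 * v * w - 4 * u - 4 * u * w - 4 * u * v - 3 * c) * r2
end

section
/- For the six-state model with the explicit parameters c₁₂ = 0.003678, c₁₃ = 0.119189, c₂₃ = 0.116629, (a₁,b₁) = (0.536022, 0.218244), (a₂,b₂) = (0.5780345, 0.1813515), (a₃,b₃) = (0.389373, 0.138991), let κ₂ ≥ κ₃ be the two eigenvalues of the quotient matrix K (with K_{ii} = a_i + b_i, K_{ij} = 2c_{ij} for i ≠ j) other than the eigenvalue 1, and let t_* := max_r (a_r − b_r)². Then the local-mode-dominated ordering κ₂² > t_* > κ₃² holds. -/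
open Matrix Polynomial

/-- The 3×3 quotient matrix `K` with `K_{ii} = a_i + b_i` and `K_{ij} = 2 c_{ij}`. -/
def quotientK (a₁ a₂ a₃ b₁ b₂ b₃ c₁₂ c₁₃ c₂₃ : ℝ) : Matrix (Fin 3) (Fin 3) ℝ :=
  !![a₁ + b₁, 2 * c₁₂, 2 * c₁₃;
     2 * c₁₂, a₂ + b₂, 2 * c₂₃;
     2 * c₁₃, 2 * c₂₃, a₃ + b₃]

/-- For the explicit parameters `c₁₂ = 0.003678`, `c₁₃ = 0.119189`,
`c₂₃ = 0.116629`, `(a₁,b₁) = (0.536022, 0.218244)`, `(a₂,b₂) = (0.5780345, 0.1813515)`,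
`(a₃,b₃) = (0.389373, 0.138991)`, if `κ₂ ≥ κ₃` are the two eigenvalues of the quotient
matrix `K` other than the eigenvalue `1`, and `t_* = max_r (a_r - b_r)²`, then the
local-mode-dominated ordering `κ₂² > t_* > κ₃²` holds. -/
theorem explicit_local_mode_ordering
    (κ₂ κ₃ : ℝ) (hord : κ₂ ≥ κ₃)
    (hchar : (quotientK 0.536022 0.5780345 0.389373
        0.218244 0.1813515 0.138991 0.003678 0.119189 0.116629).charpoly
      = (X - 1) * (X - C κ₂) * (X - C κ₃)) :
    κ₂ ^ 2 > max (max ((0.536022 - 0.218244 : ℝ) ^ 2) ((0.5780345 - 0.1813515 : ℝ) ^ 2))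
        ((0.389373 - 0.138991 : ℝ) ^ 2) ∧
    max (max ((0.536022 - 0.218244 : ℝ) ^ 2) ((0.5780345 - 0.1813515 : ℝ) ^ 2))
        ((0.389373 - 0.138991 : ℝ) ^ 2) > κ₃ ^ 2 := by
  have h0 := congrArg (Polynomial.eval (0:ℝ)) hchar
  have h2 := congrArg (Polynomial.eval (2:ℝ)) hchar
  simp only [Matrix.charpoly, Matrix.det_fin_three, charmatrix_apply, quotientK,
    Matrix.cons_val', Matrix.cons_val_zero, Matrix.cons_val_one, Matrix.head_cons,
    Matrix.empty_val', Matrix.cons_val_fin_one, Matrix.cons_val_two,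
    Matrix.tail_cons, Matrix.one_apply, Fin.isValue, Fin.reduceEq, reduceIte,
    eval_mul, eval_add, eval_sub, eval_neg, eval_X, eval_C, eval_one, eval_zero,
    Matrix.diagonal_apply, Matrix.smul_apply, smul_eq_mul, Matrix.cons_val] at h0 h2
  norm_num at h0 h2
  simp only [Matrix.cons_val, Matrix.vecHead, Matrix.vecTail] at h0 h2
  norm_num at h0 h2
  have hp : κ₂ * κ₃ = 0.21923478982 := by linarith
  have hs : κ₂ + κ₃ = 1.042016 := by nlinarith [h2]
  have hlt3 : κ₃ < 0.396683 := by
    nlinarith [sq_nonneg (κ₂ - 0.396683), sq_nonneg (κ₂ - κ₃)]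
  have hlt2 : 0.396683 < κ₂ := by
    nlinarith [sq_nonneg (κ₃ - 0.396683), sq_nonneg (κ₂ - κ₃)]
  have hκ₃pos : 0 < κ₃ := by nlinarith
  have hmax : max (max ((0.536022 - 0.218244 : ℝ) ^ 2) ((0.5780345 - 0.1813515 : ℝ) ^ 2))
        ((0.389373 - 0.138991 : ℝ) ^ 2) = (0.396683:ℝ)^2 := by
    norm_num [max_def]
  rw [hmax]
  constructor
  · nlinarith
  · nlinarith
end

section
/- For the six-state model with the explicit parameters c₁₂ = 0.003678, c₁₃ = 0.119189, c₂₃ = 0.116629, (a₁,b₁) = (0.536022, 0.218244), (a₂,b₂) = (0.5780345, 0.1813515), (a₃,b₃) = (0.389373, 0.138991), set T := P². Then for every partition 𝒜 of the six states into three nonempty cells, det Q_𝒜(T) < λ₁λ₂λ₃, where λ₁ ≥ λ₂ ≥ λ₃ are the three largest eigenvalues (with multiplicity) of T; that is, the supremum of det Q_𝒜(T) over all 90 three-cell partitions is strictly smaller than the relaxed determinant benchmark 𝔇ʳᵉˡ₃(T). -/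
open Matrix Polynomial

set_option maxHeartbeats 4000000
set_option maxRecDepth 8000

/-- The symmetric 6×6 transition matrix of the six-state model. -/
def sixStateP (a₁ a₂ a₃ b₁ b₂ b₃ c₁₂ c₁₃ c₂₃ : ℝ) : Matrix (Fin 6) (Fin 6) ℝ :=
  !![a₁,  b₁,  c₁₂, c₁₂, c₁₃, c₁₃;
     b₁,  a₁,  c₁₂, c₁₂, c₁₃, c₁₃;
     c₁₂, c₁₂, a₂,  b₂,  c₂₃, c₂₃;
     c₁₂, c₁₂, b₂,  a₂,  c₂₃, c₂₃;
     c₁₃, c₁₃, c₂₃, c₂₃, a₃,  b₃;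
     c₁₃, c₁₃, c₂₃, c₂₃, b₃,  a₃]

/-- The explicit six-state transition matrix of the certified example. -/
noncomputable def Pex : Matrix (Fin 6) (Fin 6) ℝ :=
  sixStateP 0.536022 0.5780345 0.389373 0.218244 0.1813515 0.138991
    0.003678 0.119189 0.116629

/-- The 6×3 matrix of normalized indicator columns `1_{A j}/√|A j|` of an (ordered)
partition `A` of the six states into three cells. -/
noncomputable def partH (A : Fin 3 → Finset (Fin 6)) : Matrix (Fin 6) (Fin 3) ℝ :=
  Matrix.of fun x j => if x ∈ A j then (Real.sqrt ((A j).card))⁻¹ else 0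

/-! ### Auxiliary machinery -/

lemma cons_val_five' {α} {m} (x : α) (u : Fin (m+5) → α) :
    vecCons x u 5 = vecHead (vecTail (vecTail (vecTail (vecTail u)))) := rfl

/-- `10^14` times `Pex ^ 2`, as an integer matrix. -/
def Tzi : Matrix (Fin 6) (Fin 6) ℤ :=
!![36338911883000, 26240626154600, 3336899981800, 3336899981800, 15373330999400, 15373330999400;
   26240626154600, 36338911883000, 3336899981800, 3336899981800, 15373330999400, 15373330999400;
   3336899981800, 3336899981800, 39424395239250, 23688654990350, 15106574903400, 15106574903400;
   3336899981800, 3336899981800, 23688654990350, 39424395239250, 15106574903400, 15106574903400;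
   15373330999400, 15373330999400, 15106574903400, 15106574903400, 22654651393400, 16385536801000;
   15373330999400, 15373330999400, 15106574903400, 15106574903400, 16385536801000, 22654651393400]

def qz (v w : Fin 3) (t : ℤ) : ℤ := if v = w then t else 0

def rowsum (f : Fin 6 → Fin 3) (k : Fin 3) (x : Fin 6) : ℤ :=
  qz (f 0) k (Tzi x 0) + qz (f 1) k (Tzi x 1) + qz (f 2) k (Tzi x 2) +
  qz (f 3) k (Tzi x 3) + qz (f 4) k (Tzi x 4) + qz (f 5) k (Tzi x 5)

def ent (f : Fin 6 → Fin 3) (j k : Fin 3) : ℤ :=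
  qz (f 0) j (rowsum f k 0) + qz (f 1) j (rowsum f k 1) + qz (f 2) j (rowsum f k 2) +
  qz (f 3) j (rowsum f k 3) + qz (f 4) j (rowsum f k 4) + qz (f 5) j (rowsum f k 5)

def detNzf (f : Fin 6 → Fin 3) : ℤ :=
  ent f 0 0 * (ent f 1 1 * ent f 2 2 - ent f 1 2 * ent f 2 1) -
  ent f 0 1 * (ent f 1 0 * ent f 2 2 - ent f 1 2 * ent f 2 0) +
  ent f 0 2 * (ent f 1 0 * ent f 2 1 - ent f 1 1 * ent f 2 0)

def cntz (f : Fin 6 → Fin 3) (j : Fin 3) : ℤ :=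
  qz (f 0) j 1 + qz (f 1) j 1 + qz (f 2) j 1 + qz (f 3) j 1 + qz (f 4) j 1 + qz (f 5) j 1

set_option maxRecDepth 100000 in
set_option maxHeartbeats 10000000 in
theorem partition_bound : ∀ a b c d e g : Fin 3,
    (∀ j : Fin 3, cntz ![a,b,c,d,e,g] j ≠ 0) →
    detNzf ![a,b,c,d,e,g] <
      78678701244500000000000000000000000000000 *
        (cntz ![a,b,c,d,e,g] 0 * cntz ![a,b,c,d,e,g] 1 * cntz ![a,b,c,d,e,g] 2) := by
  decide

/-- The explicit `Pex ^ 2`. -/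
lemma Pex_sq : Pex ^ 2 = Matrix.of (fun i j => (Tzi i j : ℝ) / 10^14) := by
  ext i j
  fin_cases i <;> fin_cases j <;>
    · simp only [Pex, sixStateP, Tzi, pow_two, Matrix.mul_apply, Fin.sum_univ_six,
        Matrix.cons_val_zero, Matrix.cons_val_one, Matrix.cons_val_two, Matrix.cons_val_three,
        Matrix.cons_val_four, cons_val_five', Matrix.head_cons, Matrix.tail_cons,
        Matrix.of_apply, Matrix.cons_val', Matrix.empty_val', Matrix.cons_val_fin_one,
        Int.cast_ofNat]
      norm_num

/-- Determinant of a block-diagonal `6×6` matrix of the special shape. -/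
lemma det6_blockdiag (a b c w00 w01 w02 w10 w11 w12 w20 w21 w22 : ℝ) :
    (Matrix.det
      !![a,0,0,0,0,0;
         0,b,0,0,0,0;
         0,0,c,0,0,0;
         0,0,0,w00,w01,w02;
         0,0,0,w10,w11,w12;
         0,0,0,w20,w21,w22]) =
      a * b * c * Matrix.det !![w00,w01,w02; w10,w11,w12; w20,w21,w22] := by
  have h : !![a,0,0,0,0,0;
         0,b,0,0,0,0;
         0,0,c,0,0,0;
         0,0,0,w00,w01,w02;
         0,0,0,w10,w11,w12;
         0,0,0,w20,w21,w22]
      = Matrix.reindex finSumFinEquiv finSumFinEquiv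
          (Matrix.fromBlocks !![a,0,0;0,b,0;0,0,c] 0 0
            !![w00,w01,w02; w10,w11,w12; w20,w21,w22]) := by
    ext i j
    fin_cases i <;> fin_cases j <;>
      simp [Matrix.fromBlocks, finSumFinEquiv, Fin.addCases, Fin.subNat, Fin.ext_iff,
        Matrix.one_apply] <;> rfl
  rw [h, Matrix.det_reindex_self, Matrix.det_fromBlocks_zero₂₁]
  congr 1
  rw [Matrix.det_fin_three]
  simp
noncomputable def Umat : Matrix (Fin 6) (Fin 6) ℝ :=
  !![1,0,0,1,0,0;
     -1,0,0,1,0,0;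
     0,1,0,0,1,0;
     0,-1,0,0,1,0;
     0,0,1,0,0,1;
     0,0,-1,0,0,1]

noncomputable def Cmat : Matrix (Fin 6) (Fin 6) ℝ :=
  !![(10098285728400/10^14 : ℝ), 0, 0, 0, 0, 0;
     0, (15735740248900/10^14 : ℝ), 0, 0, 0, 0;
     0, 0, (6269114592400/10^14 : ℝ), 0, 0, 0;
     0, 0, 0, (62579538037600/10^14 : ℝ), (6673799963600/10^14 : ℝ), (30746661998800/10^14 : ℝ);
     0, 0, 0, (6673799963600/10^14 : ℝ), (63113050229600/10^14 : ℝ), (30213149806800/10^14 : ℝ);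
     0, 0, 0, (30746661998800/10^14 : ℝ), (30213149806800/10^14 : ℝ), (39040188194400/10^14 : ℝ)]




lemma hTU : (Matrix.of (fun i j => (Tzi i j : ℝ) / 10^14)) * Umat = Umat * Cmat := by
  ext i j
  fin_cases i <;> fin_cases j <;>
    · simp only [Tzi, Umat, Cmat, Matrix.mul_apply, Fin.sum_univ_six,
        Matrix.cons_val_zero, Matrix.cons_val_one, Matrix.cons_val_two, Matrix.cons_val_three,
        Matrix.cons_val_four, cons_val_five', Matrix.head_cons, Matrix.tail_cons,
        Matrix.of_apply, Matrix.cons_val', Matrix.empty_val', Matrix.cons_val_fin_one]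
      norm_num

lemma hUUt : Umat * Umatᵀ = (2:ℝ) • 1 := by
  ext i j
  fin_cases i <;> fin_cases j <;>
    · simp only [Umat, Matrix.mul_apply, Fin.sum_univ_six, Matrix.transpose_apply,
        Matrix.cons_val_zero, Matrix.cons_val_one, Matrix.cons_val_two, Matrix.cons_val_three,
        Matrix.cons_val_four, cons_val_five', Matrix.head_cons, Matrix.tail_cons,
        Matrix.of_apply, Matrix.cons_val', Matrix.empty_val', Matrix.cons_val_fin_one,
        Matrix.smul_apply, Matrix.one_apply]
      norm_num [Fin.ext_iff]

lemma detU_ne : Umat.det ≠ 0 := by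
  have h2 : Umat.det * Umat.det = 2^6 := by
    calc Umat.det * Umat.det = (Umat * Umatᵀ).det := by
          rw [Matrix.det_mul, Matrix.det_transpose]
    _ = ((2:ℝ) • (1:Matrix (Fin 6) (Fin 6) ℝ)).det := by rw [hUUt]
    _ = 2^6 := by rw [Matrix.det_smul, Matrix.det_one, Fintype.card_fin, mul_one]
  intro h0
  rw [h0, mul_zero] at h2
  norm_num at h2

lemma det_shift_eq (x : ℝ) :
    (x • (1 : Matrix (Fin 6) (Fin 6) ℝ) - Pex ^ 2).det = (x • 1 - Cmat).det := by
  have h1 : (x • (1 : Matrix (Fin 6) (Fin 6) ℝ) - Pex ^ 2) * Umat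
      = Umat * (x • 1 - Cmat) := by
    rw [Pex_sq, Matrix.sub_mul, Matrix.mul_sub, Matrix.smul_mul, Matrix.one_mul, hTU,
      Matrix.mul_smul, Matrix.mul_one]
  have h2 : (x • (1 : Matrix (Fin 6) (Fin 6) ℝ) - Pex ^ 2).det * Umat.det
      = Umat.det * (x • 1 - Cmat).det := by
    rw [← Matrix.det_mul, ← Matrix.det_mul, h1]
  rw [mul_comm] at h2
  exact mul_left_cancel₀ detU_ne h2

lemma Cshift_half : (1/2 : ℝ) • (1 : Matrix (Fin 6) (Fin 6) ℝ) - Cmat =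
    !![(39901714271600/10^14 : ℝ),0,0,0,0,0;
       0,(34264259751100/10^14 : ℝ),0,0,0,0;
       0,0,(43730885407600/10^14 : ℝ),0,0,0;
       0,0,0,(-12579538037600/10^14 : ℝ),(-6673799963600/10^14 : ℝ),(-30746661998800/10^14 : ℝ);
       0,0,0,(-6673799963600/10^14 : ℝ),(-13113050229600/10^14 : ℝ),(-30213149806800/10^14 : ℝ);
       0,0,0,(-30746661998800/10^14 : ℝ),(-30213149806800/10^14 : ℝ),(10959811805600/10^14 : ℝ)] := by
  ext i j
  fin_cases i <;> fin_cases j <;>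
    · simp only [Cmat, Matrix.sub_apply, Matrix.smul_apply, Matrix.one_apply,
        Matrix.cons_val_zero, Matrix.cons_val_one, Matrix.cons_val_two, Matrix.cons_val_three,
        Matrix.cons_val_four, cons_val_five', Matrix.head_cons, Matrix.tail_cons,
        Matrix.of_apply, Matrix.cons_val', Matrix.empty_val', Matrix.cons_val_fin_one]
      norm_num [Fin.ext_iff]

lemma Cshift_35 : (3/5 : ℝ) • (1 : Matrix (Fin 6) (Fin 6) ℝ) - Cmat =
    !![(49901714271600/10^14 : ℝ),0,0,0,0,0;
       0,(44264259751100/10^14 : ℝ),0,0,0,0;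
       0,0,(53730885407600/10^14 : ℝ),0,0,0;
       0,0,0,(-2579538037600/10^14 : ℝ),(-6673799963600/10^14 : ℝ),(-30746661998800/10^14 : ℝ);
       0,0,0,(-6673799963600/10^14 : ℝ),(-3113050229600/10^14 : ℝ),(-30213149806800/10^14 : ℝ);
       0,0,0,(-30746661998800/10^14 : ℝ),(-30213149806800/10^14 : ℝ),(20959811805600/10^14 : ℝ)] := by
  ext i j
  fin_cases i <;> fin_cases j <;>
    · simp only [Cmat, Matrix.sub_apply, Matrix.smul_apply, Matrix.one_apply,
        Matrix.cons_val_zero, Matrix.cons_val_one, Matrix.cons_val_two, Matrix.cons_val_three,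
        Matrix.cons_val_four, cons_val_five', Matrix.head_cons, Matrix.tail_cons,
        Matrix.of_apply, Matrix.cons_val', Matrix.empty_val', Matrix.cons_val_fin_one]
      norm_num [Fin.ext_iff]

lemma det_half_pos : 0 < ((1/2 : ℝ) • (1 : Matrix (Fin 6) (Fin 6) ℝ) - Pex ^ 2).det := by
  rw [det_shift_eq, Cshift_half, det6_blockdiag, Matrix.det_fin_three]
  norm_num [Matrix.cons_val_zero, Matrix.cons_val_one, Matrix.cons_val_two, Matrix.head_cons, Matrix.tail_cons]

lemma det_35_neg : ((3/5 : ℝ) • (1 : Matrix (Fin 6) (Fin 6) ℝ) - Pex ^ 2).det < 0 := by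
  rw [det_shift_eq, Cshift_35, det6_blockdiag, Matrix.det_fin_three]
  norm_num [Matrix.cons_val_zero, Matrix.cons_val_one, Matrix.cons_val_two, Matrix.head_cons, Matrix.tail_cons]

lemma evalCharpoly (M : Matrix (Fin 6) (Fin 6) ℝ) (x : ℝ) :
    M.charpoly.eval x = (x • (1 : Matrix (Fin 6) (Fin 6) ℝ) - M).det := by
  rw [Matrix.charpoly, ← Polynomial.coe_evalRingHom, RingHom.map_det]
  congr 1
  ext i j
  rcases eq_or_ne i j with rfl | hij
  · simp [Matrix.charmatrix_apply_eq, Matrix.one_apply_eq]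
  · simp [Matrix.charmatrix_apply_ne _ _ _ hij, Matrix.one_apply_ne hij]

lemma ones_eig : Pex *ᵥ (fun _ => (1:ℝ)) = fun _ => (1:ℝ) := by
  funext i
  fin_cases i <;>
    · simp only [Pex, sixStateP, Matrix.mulVec, dotProduct, Fin.sum_univ_six,
        Matrix.cons_val_zero, Matrix.cons_val_one, Matrix.cons_val_two, Matrix.cons_val_three,
        Matrix.cons_val_four, cons_val_five', Matrix.head_cons, Matrix.tail_cons,
        Matrix.of_apply, Matrix.cons_val', Matrix.empty_val', Matrix.cons_val_fin_one]
      norm_num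

lemma pair_eig : Pex *ᵥ ![0,0,1,-1,0,0] = (0.396683 : ℝ) • ![0,0,1,-1,0,0] := by
  funext i
  fin_cases i <;>
    · simp only [Pex, sixStateP, Matrix.mulVec, dotProduct, Fin.sum_univ_six,
        Matrix.cons_val_zero, Matrix.cons_val_one, Matrix.cons_val_two, Matrix.cons_val_three,
        Matrix.cons_val_four, cons_val_five', Matrix.head_cons, Matrix.tail_cons,
        Matrix.of_apply, Matrix.cons_val', Matrix.empty_val', Matrix.cons_val_fin_one,
        Pi.smul_apply, smul_eq_mul]
      norm_num

lemma det_one_zero : ((1:ℝ) • (1 : Matrix (Fin 6) (Fin 6) ℝ) - Pex ^ 2).det = 0 := by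
  rw [← Matrix.exists_mulVec_eq_zero_iff]
  refine ⟨(fun _ => (1:ℝ)), ?_, ?_⟩
  · intro h
    have := congrFun h 0
    norm_num at this
  · have h2 : (Pex ^ 2) *ᵥ (fun _ => (1:ℝ)) = fun _ => (1:ℝ) := by
      rw [pow_two, ← Matrix.mulVec_mulVec, ones_eig, ones_eig]
    rw [Matrix.sub_mulVec, h2, Matrix.smul_mulVec, Matrix.one_mulVec]
    funext i
    simp

lemma det_r2_zero : ((0.157357402489:ℝ) • (1 : Matrix (Fin 6) (Fin 6) ℝ) - Pex ^ 2).det = 0 := by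
  rw [← Matrix.exists_mulVec_eq_zero_iff]
  refine ⟨![0,0,1,-1,0,0], ?_, ?_⟩
  · intro h
    have := congrFun h 2
    norm_num [Matrix.cons_val_zero, Matrix.cons_val_one, Matrix.cons_val_two, Matrix.head_cons, Matrix.tail_cons] at this
  · have h2 : (Pex ^ 2) *ᵥ ![0,0,1,-1,0,0] = (0.157357402489:ℝ) • ![0,0,1,-1,0,0] := by
      rw [pow_two, ← Matrix.mulVec_mulVec, pair_eig, Matrix.mulVec_smul, pair_eig,
        smul_smul]
      norm_num
    rw [Matrix.sub_mulVec, h2, Matrix.smul_mulVec, Matrix.one_mulVec]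
    simp

lemma fvec_eta (f : Fin 6 → Fin 3) : (![f 0, f 1, f 2, f 3, f 4, f 5] : Fin 6 → Fin 3) = f := by
  funext x; fin_cases x <;> rfl

lemma partition_det_lt (A : Fin 3 → Finset (Fin 6))
    (hne : ∀ j, (A j).Nonempty)
    (hdisj : ∀ j k, j ≠ k → Disjoint (A j) (A k))
    (hcov : ∀ x : Fin 6, ∃ j, x ∈ A j) :
    ((partH A)ᵀ * Pex ^ 2 * partH A).det < 786787012445/10^13 := by
  classical
  choose f hf using hcov
  have hmem : ∀ x j, x ∈ A j ↔ f x = j := by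
    intro x j
    constructor
    · intro hxj
      by_contra hne'
      exact Finset.disjoint_left.mp (hdisj j (f x) (fun h => hne' h.symm)) hxj (hf x)
    · rintro rfl; exact hf x
  have hcnt : ∀ j, ((A j).card : ℤ) = cntz f j := by
    intro j
    have hAj : A j = Finset.univ.filter (fun x => f x = j) := by
      ext x; simp [hmem, Finset.mem_filter]
    rw [hAj, Finset.card_filter]
    rw [Fin.sum_univ_six]
    simp [cntz, qz, apply_ite (Nat.cast : ℕ → ℤ)]
  -- the integer indicator matrix
  set Gz : Matrix (Fin 6) (Fin 3) ℤ := Matrix.of (fun x j => if f x = j then 1 else 0) with hGz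
  set G : Matrix (Fin 6) (Fin 3) ℝ := Matrix.of (fun x j => if f x = j then (1:ℝ) else 0) with hG
  set D : Matrix (Fin 3) (Fin 3) ℝ :=
    Matrix.diagonal (fun j => (Real.sqrt ((A j).card))⁻¹) with hD
  have hH : partH A = G * D := by
    ext x j
    rw [hD, Matrix.mul_diagonal]
    simp only [partH, Matrix.of_apply, hG, ite_mul, one_mul, zero_mul, hmem]
  have hQ : (partH A)ᵀ * Pex ^ 2 * partH A = D * (Gᵀ * Pex ^ 2 * G) * D := by
    rw [hH, Matrix.transpose_mul]
    have hDt : Dᵀ = D := by rw [hD, Matrix.diagonal_transpose]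
    rw [hDt]
    simp only [Matrix.mul_assoc]
  -- entries of the compressed integer matrix
  have hent : ∀ j k, (Gzᵀ * Tzi * Gz) j k = ent f j k := by
    intro j k
    rw [Matrix.mul_assoc]
    simp only [Matrix.mul_apply, Matrix.transpose_apply, hGz, Matrix.of_apply,
      ent, rowsum, qz, Fin.sum_univ_six, ite_mul, mul_ite, zero_mul, mul_zero,
      one_mul, mul_one]
  have hMz : (Gzᵀ * Tzi * Gz).det = detNzf f := by
    rw [Matrix.det_fin_three, hent, hent, hent, hent, hent, hent, hent, hent, hent]
    unfold detNzf
    ring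
  -- the real compressed matrix
  have hT : Pex ^ 2 = ((10:ℝ)^14)⁻¹ • (Tzi.map ((Int.castRingHom ℝ) : ℤ →+* ℝ)) := by
    rw [Pex_sq]
    ext i j
    simp [Matrix.map_apply, div_eq_inv_mul]
  have hGmap : G = Gz.map ((Int.castRingHom ℝ) : ℤ →+* ℝ) := by
    rw [hG, hGz]
    ext x j
    simp [Matrix.map_apply, apply_ite ((Int.castRingHom ℝ) : ℤ →+* ℝ)]
  have hN : Gᵀ * Pex ^ 2 * G
      = ((10:ℝ)^14)⁻¹ • ((Gzᵀ * Tzi * Gz).map ((Int.castRingHom ℝ) : ℤ →+* ℝ)) := by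
    rw [hT, hGmap, Matrix.mul_smul, Matrix.smul_mul, ← Matrix.transpose_map,
      ← Matrix.map_mul, ← Matrix.map_mul]
  have hdetN : (Gᵀ * Pex ^ 2 * G).det = (((10:ℝ)^14)⁻¹)^3 * ((detNzf f : ℤ) : ℝ) := by
    have hc : ((Gzᵀ * Tzi * Gz).map ⇑(Int.castRingHom ℝ)).det = ((detNzf f : ℤ) : ℝ) := by
      rw [← RingHom.mapMatrix_apply, ← RingHom.map_det, hMz]
      rfl
    rw [hN, Matrix.det_smul, Fintype.card_fin, hc]
  -- determinant of D
  have h0 : (0:ℝ) < ((A 0).card : ℝ) := by exact_mod_cast Finset.card_pos.mpr (hne 0)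
  have h1 : (0:ℝ) < ((A 1).card : ℝ) := by exact_mod_cast Finset.card_pos.mpr (hne 1)
  have h2 : (0:ℝ) < ((A 2).card : ℝ) := by exact_mod_cast Finset.card_pos.mpr (hne 2)
  have hDD : D.det * D.det
      = ((((A 0).card : ℝ)) * (((A 1).card : ℝ)) * (((A 2).card : ℝ)))⁻¹ := by
    rw [hD, Matrix.det_diagonal, Fin.prod_univ_three]
    have s0 := Real.sqrt_pos.mpr h0
    have s1 := Real.sqrt_pos.mpr h1
    have s2 := Real.sqrt_pos.mpr h2
    field_simp
    rw [Real.sq_sqrt h0.le, Real.sq_sqrt h1.le, Real.sq_sqrt h2.le]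
  -- put everything together
  have hdetQ : ((partH A)ᵀ * Pex ^ 2 * partH A).det
      = ((detNzf f : ℤ) : ℝ) * ((((10:ℝ)^14)⁻¹)^3 *
          ((((A 0).card : ℝ)) * (((A 1).card : ℝ)) * (((A 2).card : ℝ)))⁻¹) := by
    rw [hQ, Matrix.det_mul, Matrix.det_mul, hdetN]
    rw [show D.det * ((((10:ℝ)^14)⁻¹)^3 * ((detNzf f : ℤ) : ℝ)) * D.det
        = (D.det * D.det) * ((((10:ℝ)^14)⁻¹)^3 * ((detNzf f : ℤ) : ℝ)) from by ring, hDD]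
    ring
  -- the integer bound
  have hsurj : ∀ j : Fin 3, cntz f j ≠ 0 := by
    intro j
    rw [← hcnt j]
    have := Finset.card_pos.mpr (hne j)
    exact_mod_cast Nat.pos_iff_ne_zero.mp this
  have hb := partition_bound (f 0) (f 1) (f 2) (f 3) (f 4) (f 5)
  rw [fvec_eta f] at hb
  have hb2 := hb hsurj
  rw [← hcnt 0, ← hcnt 1, ← hcnt 2] at hb2
  have hbR : ((detNzf f : ℤ) : ℝ)
      < 78678701244500000000000000000000000000000 *
        ((((A 0).card : ℝ)) * (((A 1).card : ℝ)) * (((A 2).card : ℝ))) := by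
    exact_mod_cast hb2
  rw [hdetQ]
  have hposfac : (0:ℝ) < (((10:ℝ)^14)⁻¹)^3 *
      ((((A 0).card : ℝ)) * (((A 1).card : ℝ)) * (((A 2).card : ℝ)))⁻¹ := by positivity
  calc ((detNzf f : ℤ) : ℝ) * ((((10:ℝ)^14)⁻¹)^3 *
          ((((A 0).card : ℝ)) * (((A 1).card : ℝ)) * (((A 2).card : ℝ)))⁻¹)
      < (78678701244500000000000000000000000000000 *
          ((((A 0).card : ℝ)) * (((A 1).card : ℝ)) * (((A 2).card : ℝ)))) *
        ((((10:ℝ)^14)⁻¹)^3 *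
          ((((A 0).card : ℝ)) * (((A 1).card : ℝ)) * (((A 2).card : ℝ)))⁻¹) :=
        mul_lt_mul_of_pos_right hbR hposfac
    _ = 786787012445/10^13 := by
        have hne0 : ((((A 0).card : ℝ)) * (((A 1).card : ℝ)) * (((A 2).card : ℝ))) ≠ 0 := by
          positivity
        field_simp
        ring

/-- For the explicit six-state model with `T = P²`, every partition of the
six states into three nonempty cells satisfies `det Q_𝒜(T) < λ₁ λ₂ λ₃`, where
`λ₁ ≥ λ₂ ≥ ⋯ ≥ λ₆` are the eigenvalues of `T` with multiplicity (encoded by an antitone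
eigenvalue list factoring the characteristic polynomial); i.e. the supremum of the
partition-constrained determinants is strictly below the relaxed benchmark `𝔇ʳᵉˡ₃(T)`. -/
theorem explicit_global_gap
    (μ : Fin 6 → ℝ) (hμ : Antitone μ)
    (hchar : (Pex ^ 2).charpoly = ∏ i, (X - C (μ i))) :
    ∀ A : Fin 3 → Finset (Fin 6),
      (∀ j, (A j).Nonempty) →
      (∀ j k, j ≠ k → Disjoint (A j) (A k)) →
      (∀ x : Fin 6, ∃ j, x ∈ A j) →
      ((partH A)ᵀ * Pex ^ 2 * partH A).det < μ 0 * μ 1 * μ 2 := by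
  intro A hne hdisj hcov
  have hpart := partition_det_lt A hne hdisj hcov
  have hF : ∀ x : ℝ, (∏ i, (x - μ i)) = (x • (1:Matrix (Fin 6) (Fin 6) ℝ) - Pex^2).det := by
    intro x
    rw [← evalCharpoly, hchar]
    simp [Polynomial.eval_prod]
  obtain ⟨i1, hi1⟩ : ∃ i, μ i = 1 := by
    have h0 : (∏ i, ((1:ℝ) - μ i)) = 0 := by rw [hF, det_one_zero]
    obtain ⟨i, _, hi⟩ := Finset.prod_eq_zero_iff.mp h0
    exact ⟨i, by linarith [sub_eq_zero.mp hi]⟩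
  obtain ⟨i3, hi3⟩ : ∃ i, μ i = 0.157357402489 := by
    have h0 : (∏ i, ((0.157357402489:ℝ) - μ i)) = 0 := by rw [hF, det_r2_zero]
    obtain ⟨i, _, hi⟩ := Finset.prod_eq_zero_iff.mp h0
    exact ⟨i, by linarith [sub_eq_zero.mp hi]⟩
  obtain ⟨t, ht, i2, hi2⟩ : ∃ t ∈ Set.Ioo (1/2:ℝ) (3/5), ∃ i, μ i = t := by
    have hcont : Continuous (fun x : ℝ => ∏ i, (x - μ i)) := by
      apply continuous_finset_prod
      intro i _
      exact continuous_id.sub continuous_const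
    have h0mem : (0:ℝ) ∈ Set.Ioo ((fun x : ℝ => ∏ i, (x - μ i)) (3/5))
        ((fun x : ℝ => ∏ i, (x - μ i)) (1/2)) := by
      constructor
      · show (∏ i, ((3/5:ℝ) - μ i)) < 0
        rw [hF]
        exact det_35_neg
      · show (0:ℝ) < ∏ i, ((1/2:ℝ) - μ i)
        rw [hF]
        exact det_half_pos
    obtain ⟨t, htIoo, hFt⟩ :=
      intermediate_value_Ioo' (by norm_num : (1/2:ℝ) ≤ 3/5) hcont.continuousOn h0mem
    obtain ⟨i, _, hi⟩ := Finset.prod_eq_zero_iff.mp hFt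
    exact ⟨t, htIoo, i, (sub_eq_zero.mp hi).symm⟩
  obtain ⟨ht1, ht2⟩ := ht
  have hne12 : i1 ≠ i2 := by
    intro h
    rw [h, hi2] at hi1
    norm_num [hi1] at ht2
  have hne13 : i1 ≠ i3 := by
    intro h
    rw [h, hi3] at hi1
    norm_num at hi1
  have hne23 : i2 ≠ i3 := by
    intro h
    rw [h, hi3] at hi2
    rw [← hi2] at ht1
    norm_num at ht1
  have hμ0 : 1 ≤ μ 0 := hi1 ▸ hμ (Fin.zero_le i1)
  have hμ1 : 1/2 < μ 1 := by
    rcases eq_or_ne i1 0 with h | h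
    · have h2 : (1:Fin 6) ≤ i2 := by
        rw [Fin.le_def]
        have : i2.val ≠ 0 := by
          intro hv
          exact hne12 (by rw [h]; exact (Fin.ext hv).symm)
        omega
      have := hμ h2
      rw [hi2] at this
      linarith
    · have h2 : (1:Fin 6) ≤ i1 := by
        rw [Fin.le_def]
        have : i1.val ≠ 0 := fun hv => h (Fin.ext hv)
        omega
      have := hμ h2
      rw [hi1] at this
      linarith
  have hμ2 : 0.157357402489 ≤ μ 2 := by
    have hv : 2 ≤ i1.val ∨ 2 ≤ i2.val ∨ 2 ≤ i3.val := by
      have e12 : i1.val ≠ i2.val := fun h => hne12 (Fin.ext h)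
      have e13 : i1.val ≠ i3.val := fun h => hne13 (Fin.ext h)
      have e23 : i2.val ≠ i3.val := fun h => hne23 (Fin.ext h)
      omega
    rcases hv with h | h | h
    · have := hμ (show (2:Fin 6) ≤ i1 by rw [Fin.le_def]; simpa using h)
      rw [hi1] at this
      linarith
    · have := hμ (show (2:Fin 6) ≤ i2 by rw [Fin.le_def]; simpa using h)
      rw [hi2] at this
      linarith
    · have := hμ (show (2:Fin 6) ≤ i3 by rw [Fin.le_def]; simpa using h)
      rw [hi3] at this
      linarith
  have h2pos : (0:ℝ) < μ 2 := lt_of_lt_of_le (by norm_num) hμ2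
  have h1pos : (0:ℝ) < μ 1 := lt_trans (by norm_num) hμ1
  have s1 : (1/2 : ℝ) * 0.157357402489 < μ 1 * μ 2 := by
    have ha : μ 1 * 0.157357402489 ≤ μ 1 * μ 2 :=
      mul_le_mul_of_nonneg_left hμ2 (le_of_lt h1pos)
    have hb : (1/2 : ℝ) * 0.157357402489 < μ 1 * 0.157357402489 := by
      have := mul_lt_mul_of_pos_right hμ1 (show (0:ℝ) < 0.157357402489 by norm_num)
      linarith
    linarith
  have s2 : μ 1 * μ 2 ≤ μ 0 * (μ 1 * μ 2) :=
    le_mul_of_one_le_left (by positivity) hμ0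
  have hending : (786787012445/10^13 : ℝ) < μ 0 * μ 1 * μ 2 := by
    have : μ 0 * μ 1 * μ 2 = μ 0 * (μ 1 * μ 2) := by ring
    rw [this]
    have : (786787012445/10^13 : ℝ) = (1/2) * 0.157357402489 := by norm_num
    linarith
  linarith
end
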